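/- arXiv:1511.05140 — 3 statements merged into one kernel-verified Lean document; each statement's English description precedes it below -/
import Mathlib

section
/- There exist a constant C < ∞ and a sequence δ_j → 0 (both depending only on μ) such that q(j, y) ≤ C·y·j^{−1/2} + δ_j for all real y ≥ 1 and all integers j ≥ 1. -/
set_option maxHeartbeats 1000000


open MeasureTheory ProbabilityTheory Filter

noncomputable section

/-- The parameters of the spatial queue model: a "comfort zone" `[cm, cp]` with `0 < cm < cp`,
and a probability measure `μ` on `[cm, cp]` with mean `1` and positive variance. -/
structure QueueParams where
  cm : ℝ
  cp : ℝ
  cm_pos : 0 < cm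
  cm_lt_cp : cm < cp
  μ : Measure ℝ
  μ_prob : IsProbabilityMeasure μ
  μ_supp : μ (Set.Icc cm cp) = 1
  μ_mean : ∫ x, x ∂μ = 1
  μ_var_pos : 0 < ∫ x, (x - 1) ^ 2 ∂μ

/-- The standard deviation `σ` of `μ`. -/
def QueueParams.sigma (Q : QueueParams) : ℝ := Real.sqrt (∫ x, (x - 1) ^ 2 ∂Q.μ)

/-- Membership in the state space `𝕏`: configurations `0 = x_0 < x_1 < ⋯` with successive
spacings in `[cm, cp]`. -/
def QueueParams.IsConfig (Q : QueueParams) (x : ℕ → ℝ) : Prop :=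
  x 0 = 0 ∧ ∀ i : ℕ, x (i + 1) - x i ∈ Set.Icc Q.cm Q.cp

/-- `q(j,y)`: the probability that the symmetrized random walk
`S^{sym}_k = Σ_{i=1}^k (ξ'_i - ξ''_i)` (with `ξ', ξ''` independent i.i.d.(μ)) satisfies
`max_{1 ≤ k ≤ j} S^{sym}_k ≤ y`. -/
def QueueParams.symWalkProb (Q : QueueParams) (j : ℕ) (y : ℝ) : ℝ :=
  haveI := Q.μ_prob
  ((Measure.pi fun _ : Fin j => Q.μ.prod Q.μ)
    {v : Fin j → ℝ × ℝ | ∀ k ∈ Finset.Icc 1 j,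
      (∑ i ∈ Finset.univ.filter (fun i : Fin j => (i : ℕ) < k), ((v i).1 - (v i).2)) ≤ y}).toReal

/-- `q_{j,y}(x_1, …, x_j)`: the probability that
`max_{1 ≤ k ≤ j} Σ_{i=1}^k (ξ'_i - x_i) ≤ y`, where `(ξ'_i)` is i.i.d.(μ). -/
def QueueParams.condWalkProb (Q : QueueParams) (j : ℕ) (y : ℝ) (x : ℕ → ℝ) : ℝ :=
  haveI := Q.μ_prob
  ((Measure.pi fun _ : Fin j => Q.μ)
    {v : Fin j → ℝ | ∀ k ∈ Finset.Icc 1 j,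
      (∑ i ∈ Finset.univ.filter (fun i : Fin j => (i : ℕ) < k), v i)
        - (∑ i ∈ Finset.Icc 1 k, x i) ≤ y}).toReal

/-- A sequence `(x_1, …, x_j)` is `(j,y)`-good if `q_{j,y}(x_1,…,x_j) ≤ 2 q(j,y)`. -/
def QueueParams.IsGood (Q : QueueParams) (j : ℕ) (y : ℝ) (x : ℕ → ℝ) : Prop :=
  Q.condWalkProb j y x ≤ 2 * Q.symWalkProb j y

/-- The spatial queue process with parameters `Q`, driven by an i.i.d.(μ) array
`(ξ i t)_{i ≥ 1, t ≥ 1}`, started from an arbitrary (deterministic) initial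
configuration `x0 ∈ 𝕏`.  `X i t` is the position of the rank-`i` customer at time `t`,
defined by the recursion (1)–(3) of the paper: at step `t`, customer `i ≥ 1` moves to
`ξ_1(t) + ⋯ + ξ_i(t)` if `Σ_{m ≤ k} ξ_m(t) < X_{k+1}(t-1) - cp` for all `1 ≤ k ≤ i`
(i.e. `i < W(t)`), and otherwise stays at `X_{i+1}(t-1)`. -/
structure QueueProcess (Q : QueueParams) (Ω : Type) [MeasurableSpace Ω] where
  P : Measure Ω
  P_prob : IsProbabilityMeasure P
  ξ : ℕ → ℕ → Ω → ℝ
  ξ_meas : ∀ i t, 1 ≤ i → 1 ≤ t → Measurable (ξ i t)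
  ξ_range : ∀ i t ω, 1 ≤ i → 1 ≤ t → ξ i t ω ∈ Set.Icc Q.cm Q.cp
  ξ_law : ∀ i t, 1 ≤ i → 1 ≤ t → P.map (ξ i t) = Q.μ
  ξ_indep : iIndepFun
    (fun p : ℕ × ℕ => ξ (p.1 + 1) (p.2 + 1)) P
  X : ℕ → ℕ → Ω → ℝ
  X_meas : ∀ i t, Measurable (X i t)
  x0 : ℕ → ℝ
  x0_config : Q.IsConfig x0
  X_init : ∀ i ω, X i 0 ω = x0 i
  X_zero : ∀ t ω, X 0 t ω = 0
  X_move : ∀ t ω i, 1 ≤ t → 1 ≤ i →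
    (∀ k ∈ Finset.Icc 1 i, (∑ m ∈ Finset.Icc 1 k, ξ m t ω) < X (k + 1) (t - 1) ω - Q.cp) →
    X i t ω = ∑ m ∈ Finset.Icc 1 i, ξ m t ω
  X_stay : ∀ t ω i, 1 ≤ t → 1 ≤ i →
    ¬ (∀ k ∈ Finset.Icc 1 i, (∑ m ∈ Finset.Icc 1 k, ξ m t ω) < X (k + 1) (t - 1) ω - Q.cp) →
    X i t ω = X (i + 1) (t - 1) ω

namespace QueueProcess

variable {Q : QueueParams} {Ω : Type} [MeasurableSpace Ω]

/-- The wave length `W(t)` at step `t`: the least `i ≥ 1` with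
`ξ_1(t) + ⋯ + ξ_i(t) ≥ X_{i+1}(t-1) - cp`, or `∞` if there is no such `i`. -/
def W (qp : QueueProcess Q Ω) (t : ℕ) (ω : Ω) : ℕ∞ :=
  ⨅ n ∈ {n : ℕ | 1 ≤ n ∧
    qp.X (n + 1) (t - 1) ω - Q.cp ≤ ∑ m ∈ Finset.Icc 1 n, qp.ξ m t ω}, (n : ℕ∞)

/-- `ρ⁺(j) = limsup_{τ→∞} τ⁻¹ Σ_{t=1}^τ P(W(t) > j)`. -/
def rhoPlus (qp : QueueProcess Q Ω) (j : ℕ) : ℝ :=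
  Filter.limsup (fun τ : ℕ =>
    (τ : ℝ)⁻¹ * ∑ t ∈ Finset.Icc 1 τ, (qp.P {ω | (j : ℕ∞) < qp.W t ω}).toReal) Filter.atTop

/-- `ρ₋(j) = liminf_{τ→∞} τ⁻¹ Σ_{t=1}^τ P(W(t) > j)`. -/
def rhoMinus (qp : QueueProcess Q Ω) (j : ℕ) : ℝ :=
  Filter.liminf (fun τ : ℕ =>
    (τ : ℝ)⁻¹ * ∑ t ∈ Finset.Icc 1 τ, (qp.P {ω | (j : ℕ∞) < qp.W t ω}).toReal) Filter.atTop

/-- `X*_s(t) = X_{s-t}(t)`: the position of the individual of initial rank `s` at time `t ≤ s`. -/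
def Xstar (qp : QueueProcess Q Ω) (s t : ℕ) (ω : Ω) : ℝ := qp.X (s - t) t ω

/-- `L_s(t0)`: the time since the last move of individual `s`, i.e. the largest `ℓ ≤ t0` with
`X*_s(t0) = X*_s(t0 - ℓ)` (equal to `t0` if individual `s` has never moved). -/
def Lmove (qp : QueueProcess Q Ω) (s t0 : ℕ) (ω : Ω) : ℕ :=
  sSup {ℓ : ℕ | ℓ ≤ t0 ∧ qp.Xstar s t0 ω = qp.Xstar s (t0 - ℓ) ω}

/-- The event `A_{s+1}(t0) = {L_s(t0) = L_{s+1}(t0) < t0}` that individuals `s` and `s+1`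
are in the same block at time `t0`. -/
def blockEvent (qp : QueueProcess Q Ω) (s t0 : ℕ) : Set Ω :=
  {ω | qp.Lmove s t0 ω = qp.Lmove (s + 1) t0 ω ∧ qp.Lmove s t0 ω < t0}

/-- `M(t0) = min{s ≥ t0 : X*_s(t0) = X*_s(0)}` (`∞` if there is no such `s`). -/
def Mfirst (qp : QueueProcess Q Ω) (t0 : ℕ) (ω : Ω) : ℕ∞ :=
  ⨅ s ∈ {s : ℕ | t0 ≤ s ∧ qp.Xstar s t0 ω = qp.Xstar s 0 ω}, (s : ℕ∞)

/-- The natural filtration `ℱ(t) = σ(𝐗(u), 0 ≤ u ≤ t)` of the process. -/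
def F (qp : QueueProcess Q Ω) (t : ℕ) : MeasurableSpace Ω :=
  ⨆ u ∈ Set.Iic t, MeasurableSpace.comap (fun ω (i : ℕ) => qp.X i u ω)
    (inferInstance : MeasurableSpace (ℕ → ℝ))

/-- The σ-field generated by `𝐗_{[s]}(t) = (X_i(t), 0 ≤ i ≤ s - t)`, the positions of
individual `s` and the customers ahead of it at time `t`. -/
def sigmaXupto (qp : QueueProcess Q Ω) (s t : ℕ) : MeasurableSpace Ω :=
  MeasurableSpace.comap (fun ω (i : ℕ) => if i ≤ s - t then qp.X i t ω else 0)
    (inferInstance : MeasurableSpace (ℕ → ℝ))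

/-- The σ-field `𝒢_s(t0) = σ(𝐗_{[s]}(t), 0 ≤ t ≤ t0; A_{s+1}(t0))`. -/
def Gfield (qp : QueueProcess Q Ω) (s t0 : ℕ) : MeasurableSpace Ω :=
  (⨆ t ∈ Set.Iic t0, qp.sigmaXupto s t)
    ⊔ MeasurableSpace.generateFrom {qp.blockEvent s t0}

/-- The event `A_t = {W(t) > s - t}` that individual `s` moves at time `t`. -/
def waveA (qp : QueueProcess Q Ω) (s t : ℕ) : Set Ω :=
  {ω | ((s - t : ℕ) : ℕ∞) < qp.W t ω}

/-- The event `C_t = {W(t) > s - t + j}` of a long wave at time `t`. -/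
def waveC (qp : QueueProcess Q Ω) (s j t : ℕ) : Set Ω :=
  {ω | ((s - t + j : ℕ) : ℕ∞) < qp.W t ω}

/-- The event `B_t` that the long wave at time `t` is good. -/
def waveB (qp : QueueProcess Q Ω) (s j : ℕ) (y : ℝ) (t : ℕ) : Set Ω :=
  qp.waveC s j t ∩ {ω | Q.IsGood j y (fun i => qp.ξ (s - t + i) t ω)}

/-- The successive times `T_u` of good long waves (`T_0 = 0` by convention). -/
def Tgood (qp : QueueProcess Q Ω) (s j : ℕ) (y : ℝ) : ℕ → Ω → ℕ∞
  | 0 => fun _ => 0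
  | u + 1 => fun ω =>
      ⨅ t ∈ {t : ℕ | qp.Tgood s j y u ω < (t : ℕ∞) ∧ ω ∈ qp.waveB s j y t}, (t : ℕ∞)

/-- `N_A(n) = Σ_{t=1}^n 1_{A_t}`, the number of waves up to time `n` that move individual `s`. -/
def NA (qp : QueueProcess Q Ω) (s n : ℕ) (ω : Ω) : ℝ :=
  ∑ t ∈ Finset.Icc 1 n, Set.indicator (qp.waveA s t) (fun _ => (1 : ℝ)) ω

/-- `G(t,x) = t + F_t(x)` where `F_t(x) = max{k : X_k(t) ≤ x} - x` is the centered counting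
function of the time-`t` configuration. -/
def G (qp : QueueProcess Q Ω) (t : ℕ) (x : ℝ) (ω : Ω) : ℝ :=
  (t : ℝ) + ((sSup {k : ℕ | qp.X k t ω ≤ x} : ℕ) : ℝ) - x

end QueueProcess

noncomputable section SQA
open Classical
open Finset

def SQA.stepf (p : ℝ × ℝ) : ℝ := p.1 - p.2

def SQA.Ssum (n : ℕ) (k : ℕ) (v : Fin n → ℝ × ℝ) : ℝ :=
  ∑ i ∈ Finset.univ.filter (fun i : Fin n => (i : ℕ) < k), SQA.stepf (v i)

def SQA.condC (n : ℕ) (z y : ℝ) (j : ℕ) (v : Fin n → ℝ × ℝ) : Prop :=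
  ∀ k ∈ Finset.Icc 1 j, -z ≤ SQA.Ssum n k v ∧ SQA.Ssum n k v ≤ y

def SQA.Tfun (n : ℕ) (z y : ℝ) (i : Fin n) (v : Fin n → ℝ × ℝ) : ℝ :=
  if SQA.condC n z y (i : ℕ) v then SQA.stepf (v i) else 0

def SQA.Vfun (n : ℕ) (z y : ℝ) (v : Fin n → ℝ × ℝ) : ℝ := ∑ i : Fin n, SQA.Tfun n z y i v

namespace SQA

lemma Ssum_zero (n : ℕ) (v : Fin n → ℝ × ℝ) : Ssum n 0 v = 0 := by
  simp [Ssum]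

lemma Ssum_succ (n : ℕ) (k : ℕ) (hk : k < n) (v : Fin n → ℝ × ℝ) :
    Ssum n (k + 1) v = Ssum n k v + stepf (v ⟨k, hk⟩) := by
  have h : Finset.univ.filter (fun i : Fin n => (i : ℕ) < k + 1)
      = insert (⟨k, hk⟩ : Fin n) (Finset.univ.filter (fun i : Fin n => (i : ℕ) < k)) := by
    ext i
    simp [Nat.lt_succ_iff_lt_or_eq, Fin.ext_iff, or_comm]
    omega
  rw [Ssum, h, Finset.sum_insert (by simp)]
  rw [add_comm]
  rfl

lemma Ssum_congr {n : ℕ} (k : ℕ) {v w : Fin n → ℝ × ℝ}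
    (h : ∀ j : Fin n, (j : ℕ) < k → v j = w j) : Ssum n k v = Ssum n k w := by
  refine Finset.sum_congr rfl fun i hi => ?_
  rw [Finset.mem_filter] at hi
  rw [h i hi.2]

lemma condC_congr {n : ℕ} (z y : ℝ) (j : ℕ) {v w : Fin n → ℝ × ℝ}
    (h : ∀ i : Fin n, (i : ℕ) < j → v i = w i) : condC n z y j v ↔ condC n z y j w := by
  unfold condC
  refine forall₂_congr fun k hk => ?_
  rw [Finset.mem_Icc] at hk
  rw [Ssum_congr k fun i hi => h i (lt_of_lt_of_le hi hk.2)]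

/-- The structural lemma: `V = S_{m₀}` for the first exit index `m₀`. -/
lemma V_structure (n : ℕ) (hn : 0 < n) (z y : ℝ) (v : Fin n → ℝ × ℝ) :
    ∃ m₀ : ℕ, 1 ≤ m₀ ∧ m₀ ≤ n ∧ Vfun n z y v = Ssum n m₀ v ∧
      (∀ k, 1 ≤ k → k < m₀ → -z ≤ Ssum n k v ∧ Ssum n k v ≤ y) ∧
      ((∃ k ∈ Finset.Icc 1 n, ¬(-z ≤ Ssum n k v ∧ Ssum n k v ≤ y)) →
        ¬(-z ≤ Ssum n m₀ v ∧ Ssum n m₀ v ≤ y)) := by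
  set bad := (Finset.Icc 1 n).filter (fun k => ¬(-z ≤ Ssum n k v ∧ Ssum n k v ≤ y)) with hbaddef
  have hVeq : ∀ m₀ : ℕ, (∀ i : Fin n, condC n z y (i : ℕ) v ↔ (i : ℕ) < m₀) →
      Vfun n z y v = Ssum n m₀ v := by
    intro m₀ hiff
    rw [Vfun, Ssum, Finset.sum_filter]
    refine Finset.sum_congr rfl fun i _ => ?_
    rw [Tfun]
    exact if_congr (hiff i) rfl rfl
  by_cases hbad : bad.Nonempty
  · set m₀ := bad.min' hbad with hm₀
    have hmem : m₀ ∈ bad := bad.min'_mem hbad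
    rw [hbaddef, Finset.mem_filter, Finset.mem_Icc] at hmem
    have hgood : ∀ k, 1 ≤ k → k < m₀ → -z ≤ Ssum n k v ∧ Ssum n k v ≤ y := by
      intro k hk1 hkm
      by_contra hcon
      have : k ∈ bad := by
        rw [hbaddef, Finset.mem_filter, Finset.mem_Icc]
        exact ⟨⟨hk1, le_trans (le_of_lt hkm) hmem.1.2⟩, hcon⟩
      exact absurd (bad.min'_le k this) (not_le.2 hkm)
    refine ⟨m₀, hmem.1.1, hmem.1.2, hVeq m₀ fun i => ?_, hgood, fun _ => hmem.2⟩
    constructor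
    · intro hc
      by_contra hge
      push_neg at hge
      exact hmem.2 (hc m₀ (Finset.mem_Icc.2 ⟨hmem.1.1, hge⟩))
    · intro hlt k hk
      rw [Finset.mem_Icc] at hk
      exact hgood k hk.1 (lt_of_le_of_lt hk.2 hlt)
  · have hempty : bad = ∅ := Finset.not_nonempty_iff_eq_empty.1 hbad
    have hgoodall : ∀ k, 1 ≤ k → k ≤ n → -z ≤ Ssum n k v ∧ Ssum n k v ≤ y := by
      intro k hk1 hkn
      by_contra hcon
      have : k ∈ bad := by
        rw [hbaddef, Finset.mem_filter, Finset.mem_Icc]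
        exact ⟨⟨hk1, hkn⟩, hcon⟩
      simp [hempty] at this
    refine ⟨n, hn, le_refl n, hVeq n fun i => ?_, fun k h1 h2 => hgoodall k h1 (le_of_lt h2),
      fun hex => ?_⟩
    · simp only [i.isLt, iff_true]
      intro k hk
      rw [Finset.mem_Icc] at hk
      exact hgoodall k hk.1 (le_trans hk.2 i.isLt.le)
    · obtain ⟨k, hk, hkbad⟩ := hex
      have : k ∈ bad := by rw [hbaddef, Finset.mem_filter]; exact ⟨hk, hkbad⟩
      simp [hempty] at this

/-- Pointwise bounds on `V` for configurations with bounded steps. -/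
lemma V_bounds (n : ℕ) (hn : 0 < n) (z y b : ℝ) (hz : 0 ≤ z) (hy : 0 ≤ y)
    (v : Fin n → ℝ × ℝ) (hb : ∀ i : Fin n, |stepf (v i)| ≤ b) :
    (-(z + b) ≤ Vfun n z y v ∧ Vfun n z y v ≤ y + b) ∧
      ((∀ k ∈ Finset.Icc 1 n, Ssum n k v ≤ y) →
        ¬(∀ k ∈ Finset.Icc 1 n, -z ≤ Ssum n k v ∧ Ssum n k v ≤ y) →
        Vfun n z y v < -z) := by
  obtain ⟨m₀, hm1, hmn, hVeq, hgood, hbadprop⟩ := V_structure n hn z y v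
  have hm₀pred : m₀ - 1 < n := lt_of_lt_of_le (Nat.pred_lt (Nat.one_le_iff_ne_zero.1 hm1)) hmn
  have hsplit : Ssum n m₀ v = Ssum n (m₀ - 1) v + stepf (v ⟨m₀ - 1, hm₀pred⟩) := by
    conv_lhs => rw [show m₀ = (m₀ - 1) + 1 from (Nat.succ_pred_eq_of_pos hm1).symm]
    exact Ssum_succ n (m₀ - 1) hm₀pred v
  have hprev : -z ≤ Ssum n (m₀ - 1) v ∧ Ssum n (m₀ - 1) v ≤ y := by
    rcases Nat.eq_zero_or_pos (m₀ - 1) with h0 | hpos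
    · rw [h0, Ssum_zero]
      exact ⟨neg_nonpos.2 hz, hy⟩
    · exact hgood _ hpos (Nat.pred_lt (Nat.one_le_iff_ne_zero.1 hm1))
  have hstep := hb ⟨m₀ - 1, hm₀pred⟩
  rw [abs_le] at hstep
  constructor
  · rw [hVeq, hsplit]
    constructor <;> [linarith [hprev.1, hstep.1]; linarith [hprev.2, hstep.2]]
  · intro hA hB
    have hex : ∃ k ∈ Finset.Icc 1 n, ¬(-z ≤ Ssum n k v ∧ Ssum n k v ≤ y) := by
      by_contra h
      push_neg at h
      exact hB fun k hk => h k hk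
    have hbad := hbadprop hex
    have hup : Ssum n m₀ v ≤ y := hA m₀ (Finset.mem_Icc.2 ⟨hm1, hmn⟩)
    rw [hVeq]
    by_contra hcon
    push_neg at hcon
    exact hbad ⟨hcon, hup⟩


lemma measurable_step_eval {n : ℕ} (i : Fin n) :
    Measurable fun v : Fin n → ℝ × ℝ => stepf (v i) :=
  ((measurable_pi_apply i).fst).sub ((measurable_pi_apply i).snd)

lemma measurable_Ssum {n : ℕ} (k : ℕ) : Measurable (Ssum n k) :=
  Finset.measurable_sum _ fun i _ => measurable_step_eval i

lemma measurableSet_condC {n : ℕ} (z y : ℝ) (j : ℕ) :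
    MeasurableSet {v : Fin n → ℝ × ℝ | condC n z y j v} := by
  have h : {v : Fin n → ℝ × ℝ | condC n z y j v}
      = ⋂ k ∈ (Finset.Icc 1 j : Finset ℕ), ({v | -z ≤ Ssum n k v} ∩ {v | Ssum n k v ≤ y}) := by
    ext v
    simp [condC, Set.mem_iInter]
  rw [h]
  refine MeasurableSet.biInter (Finset.Icc 1 j).countable_toSet fun k _ => ?_
  exact (measurableSet_le measurable_const (measurable_Ssum k)).inter
    (measurableSet_le (measurable_Ssum k) measurable_const)

lemma Tfun_def (n : ℕ) (z y : ℝ) (i : Fin n) (v : Fin n → ℝ × ℝ) :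
    Tfun n z y i v = if condC n z y (i : ℕ) v then stepf (v i) else 0 := rfl

lemma measurable_Tfun {n : ℕ} (z y : ℝ) (i : Fin n) : Measurable (Tfun n z y i) :=
  Measurable.ite (measurableSet_condC z y i) (measurable_step_eval i) measurable_const

lemma measurable_Vfun {n : ℕ} (z y : ℝ) : Measurable (Vfun n z y) :=
  Finset.measurable_sum _ fun i _ => measurable_Tfun z y i

lemma indep_eval_mul (ν : Measure (ℝ × ℝ)) [IsProbabilityMeasure ν]
    {m : ℕ} (i : Fin (m+1)) (F : (Fin (m+1) → ℝ × ℝ) → ℝ) (g : ℝ × ℝ → ℝ)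
    (hFdep : ∀ v w : Fin (m+1) → ℝ × ℝ, (∀ j, j ≠ i → v j = w j) → F v = F w) :
    ∫ v, F v * g (v i) ∂(Measure.pi fun _ : Fin (m+1) => ν)
      = (∫ v, F v ∂(Measure.pi fun _ : Fin (m+1) => ν)) * ∫ p, g p ∂ν := by
  set x₀ : ℝ × ℝ := (0, 0)
  set P := Measure.pi fun _ : Fin (m+1) => ν with hP
  set P' := Measure.pi fun _ : Fin m => ν with hP'
  have hMP : MeasurePreserving (MeasurableEquiv.piFinSuccAbove (fun _ : Fin (m+1) => ℝ × ℝ) i)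
      P (ν.prod P') := measurePreserving_piFinSuccAbove (fun _ : Fin (m+1) => ν) i
  set e := MeasurableEquiv.piFinSuccAbove (fun _ : Fin (m+1) => ℝ × ℝ) i with he
  have hsymm : ∀ z : (ℝ × ℝ) × (Fin m → ℝ × ℝ), e.symm z = i.insertNth z.1 z.2 := by
    intro z
    simp [he, MeasurableEquiv.piFinSuccAbove_symm_apply, Fin.insertNthEquiv]
  have h1 : ∀ H : (Fin (m+1) → ℝ × ℝ) → ℝ,
      ∫ v, H v ∂P = ∫ z : (ℝ × ℝ) × (Fin m → ℝ × ℝ), H (i.insertNth z.1 z.2) ∂(ν.prod P') := by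
    intro H
    have h := hMP.integral_comp' (f := e) (fun z => H (e.symm z))
    simp only [e.symm_apply_apply] at h
    rw [h]
    refine integral_congr_ae (Filter.Eventually.of_forall fun z => ?_)
    dsimp only
    rw [hsymm]
  have hrep : ∀ (x : ℝ × ℝ) (r : Fin m → ℝ × ℝ),
      F (i.insertNth x r) = F (i.insertNth x₀ r) := by
    intro x r
    apply hFdep
    intro j hj
    obtain ⟨k, rfl⟩ := Fin.exists_succAbove_eq hj
    rw [Fin.insertNth_apply_succAbove, Fin.insertNth_apply_succAbove]
  have hF' : ∫ v, F v ∂P = ∫ r, F (i.insertNth x₀ r) ∂P' := by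
    rw [h1 F]
    have h2 := integral_prod_mul (μ := ν) (ν := P') (fun _ => (1:ℝ))
      (fun r => F (i.insertNth x₀ r))
    simp only [one_mul, integral_const, probReal_univ, ENNReal.toReal_one, smul_eq_mul] at h2
    rw [← h2]
    refine integral_congr_ae (Filter.Eventually.of_forall fun z => ?_)
    dsimp only
    rw [hrep]
  calc ∫ v, F v * g (v i) ∂P
      = ∫ z : (ℝ × ℝ) × (Fin m → ℝ × ℝ), g z.1 * F (i.insertNth x₀ z.2) ∂(ν.prod P') := by
        rw [h1 (fun v => F v * g (v i))]
        refine integral_congr_ae (Filter.Eventually.of_forall fun z => ?_)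
        dsimp only
        rw [Fin.insertNth_apply_same, hrep, mul_comm]
    _ = (∫ p, g p ∂ν) * ∫ r, F (i.insertNth x₀ r) ∂P' :=
        integral_prod_mul (μ := ν) (ν := P') g (fun r => F (i.insertNth x₀ r))
    _ = (∫ v, F v ∂P) * ∫ p, g p ∂ν := by rw [hF', mul_comm]

lemma walk_bound (ν : Measure (ℝ × ℝ)) [IsProbabilityMeasure ν] (b s2 : ℝ)
    (hb : 0 < b) (hs2 : 0 < s2)
    (hae : ∀ᵐ p ∂ν, |stepf p| ≤ b)
    (hm1 : (∫ p, stepf p ∂ν) = 0)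
    (hm2 : (∫ p, stepf p ^ 2 ∂ν) = s2)
    (n : ℕ) (hn : 1 ≤ n) (y : ℝ) (hy : 1 ≤ y) :
    ((Measure.pi fun _ : Fin n => ν)
        {v : Fin n → ℝ × ℝ | ∀ k ∈ Finset.Icc 1 n, Ssum n k v ≤ y}).toReal
      ≤ ((1 + b) + (1 + b) ^ 2 / s2) * y / Real.sqrt n := by
  classical
  obtain ⟨m, rfl⟩ : ∃ m : ℕ, n = m + 1 := ⟨n - 1, (Nat.succ_pred_eq_of_pos hn).symm⟩
  set P := Measure.pi fun _ : Fin (m+1) => ν with hPdef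
  set z := Real.sqrt ((m+1 : ℕ) : ℝ) with hzdef
  have hz1 : 1 ≤ z := by
    rw [hzdef]
    rw [show (1:ℝ) = Real.sqrt 1 from (Real.sqrt_one).symm]
    exact Real.sqrt_le_sqrt (by push_cast; linarith)
  have hzpos : 0 < z := lt_of_lt_of_le one_pos hz1
  have hzsq : z ^ 2 = ((m+1 : ℕ) : ℝ) := Real.sq_sqrt (by positivity)
  have hy0 : 0 ≤ y := le_trans zero_le_one hy
  -- step measurability
  have hstepmeas : Measurable stepf := measurable_fst.sub measurable_snd
  -- a.e. all steps bounded
  have hK : MeasurableSet {p : ℝ × ℝ | |stepf p| ≤ b} :=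
    measurableSet_le hstepmeas.abs measurable_const
  have hKν : ν {p : ℝ × ℝ | |stepf p| ≤ b} = 1 := by
    have h0 : ν {p : ℝ × ℝ | ¬ |stepf p| ≤ b} = 0 := ae_iff.1 hae
    have h1 := measure_add_measure_compl (μ := ν) hK
    rw [Set.compl_setOf] at h1
    rw [h0, add_zero] at h1
    rw [h1, measure_univ]
  have haeP : ∀ᵐ v ∂P, ∀ i : Fin (m+1), |stepf (v i)| ≤ b := by
    have hmeaspi : MeasurableSet
        (Set.pi Set.univ fun _ : Fin (m+1) => {p : ℝ × ℝ | |stepf p| ≤ b}) :=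
      MeasurableSet.univ_pi fun _ => hK
    have hpi : P (Set.pi Set.univ fun _ : Fin (m+1) => {p : ℝ × ℝ | |stepf p| ≤ b}) = 1 := by
      rw [hPdef, Measure.pi_pi]
      simp [hKν]
    have hcompl :
        P (Set.pi Set.univ fun _ : Fin (m+1) => {p : ℝ × ℝ | |stepf p| ≤ b})ᶜ = 0 := by
      rw [measure_compl hmeaspi (measure_ne_top _ _), hpi, measure_univ, tsub_self]
    refine ae_iff.2 ?_
    have hseteq : {v : Fin (m+1) → ℝ × ℝ | ¬ ∀ i : Fin (m+1), |stepf (v i)| ≤ b}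
        = (Set.pi Set.univ fun _ : Fin (m+1) => {p : ℝ × ℝ | |stepf p| ≤ b})ᶜ := by
      ext v
      simp [Set.mem_pi]
    rw [hseteq]
    exact hcompl
  -- integrability helper
  have hint : ∀ (f : (Fin (m+1) → ℝ × ℝ) → ℝ) (C : ℝ), Measurable f →
      (∀ᵐ v ∂P, |f v| ≤ C) → Integrable f P := fun f C hf hC =>
    Integrable.mono' (integrable_const C) hf.aestronglyMeasurable
      (by simpa [Real.norm_eq_abs] using hC)
  -- abbreviations
  set T : Fin (m+1) → (Fin (m+1) → ℝ × ℝ) → ℝ := fun i => Tfun (m+1) z y i with hTdef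
  set V : (Fin (m+1) → ℝ × ℝ) → ℝ := Vfun (m+1) z y with hVdef
  set χ : ℕ → (Fin (m+1) → ℝ × ℝ) → ℝ :=
    fun j v => if condC (m+1) z y j v then 1 else 0 with hχdef
  -- pointwise bounds on T
  have hTptbd : ∀ (i : Fin (m+1)) v, (∀ l : Fin (m+1), |stepf (v l)| ≤ b) → |T i v| ≤ b := by
    intro i v hv
    simp only [hTdef, Tfun_def]
    by_cases h : condC (m+1) z y (i : ℕ) v
    · simpa [h] using hv i
    · simp [h, le_of_lt hb]
  have hTbd : ∀ i : Fin (m+1), ∀ᵐ v ∂P, |T i v| ≤ b := fun i => by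
    filter_upwards [haeP] with v hv using hTptbd i v hv
  have hTmeas : ∀ i : Fin (m+1), Measurable (T i) := fun i => measurable_Tfun z y i
  have hTint : ∀ i : Fin (m+1), Integrable (T i) P :=
    fun i => hint (T i) b (hTmeas i) (hTbd i)
  have hTTint : ∀ i j : Fin (m+1), Integrable (fun v => T i v * T j v) P := by
    intro i j
    refine hint _ (b * b) ((hTmeas i).mul (hTmeas j)) ?_
    filter_upwards [haeP] with v hv
    rw [abs_mul]
    exact mul_le_mul (hTptbd i v hv) (hTptbd j v hv) (abs_nonneg _) (le_of_lt hb)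
  have hVmeas : Measurable V := measurable_Vfun z y
  have hVptbd : ∀ v, (∀ l : Fin (m+1), |stepf (v l)| ≤ b) → |V v| ≤ ((m+1 : ℕ) : ℝ) * b := by
    intro v hv
    rw [hVdef, Vfun]
    calc |∑ i : Fin (m+1), Tfun (m+1) z y i v| ≤ ∑ i : Fin (m+1), |Tfun (m+1) z y i v| :=
          Finset.abs_sum_le_sum_abs _ _
      _ ≤ ∑ _i : Fin (m+1), b := Finset.sum_le_sum fun i _ => hTptbd i v hv
      _ = ((m+1 : ℕ) : ℝ) * b := by simp [mul_comm]
  have hVbd : ∀ᵐ v ∂P, |V v| ≤ ((m+1 : ℕ) : ℝ) * b := by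
    filter_upwards [haeP] with v hv using hVptbd v hv
  have hVint : Integrable V P := hint V _ hVmeas hVbd
  have hV2int : Integrable (fun v => V v ^ 2) P := by
    refine hint _ ((((m+1 : ℕ) : ℝ) * b) ^ 2) (hVmeas.pow_const 2) ?_
    filter_upwards [haeP] with v hv
    calc |V v ^ 2| = |V v| ^ 2 := abs_pow _ 2
      _ ≤ (((m+1 : ℕ) : ℝ) * b) ^ 2 := pow_le_pow_left₀ (abs_nonneg _) (hVptbd v hv) 2
  have hχmeas : ∀ j : ℕ, Measurable (χ j) := fun j =>
    Measurable.ite (measurableSet_condC z y j) measurable_const measurable_const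
  have hχint : ∀ j : ℕ, Integrable (χ j) P := by
    intro j
    refine hint _ 1 (hχmeas j) (Filter.Eventually.of_forall fun v => ?_)
    simp only [hχdef]
    by_cases h : condC (m+1) z y j v <;> simp [h]
  -- dependence lemmas
  have hne : ∀ (i j : Fin (m+1)), (j : ℕ) < (i : ℕ) → j ≠ i :=
    fun i j h => Fin.ne_of_val_ne (ne_of_lt h)
  have hdep_chi : ∀ i : Fin (m+1), ∀ v w : Fin (m+1) → ℝ × ℝ,
      (∀ j, j ≠ i → v j = w j) → χ (i : ℕ) v = χ (i : ℕ) w := by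
    intro i v w h
    simp only [hχdef]
    exact if_congr (condC_congr z y (i : ℕ) fun j hj => h j (hne i j hj)) rfl rfl
  have hdep_T : ∀ (i j : Fin (m+1)), (j : ℕ) < (i : ℕ) → ∀ v w : Fin (m+1) → ℝ × ℝ,
      (∀ l, l ≠ i → v l = w l) → T j v = T j w := by
    intro i j hij v w h
    simp only [hTdef, Tfun_def]
    rw [h j (hne i j hij)]
    exact if_congr (condC_congr z y (j : ℕ) fun l hl =>
      h l (hne i l (lt_trans hl hij))) rfl rfl
  -- first moment of T
  have hT0 : ∀ i : Fin (m+1), (∫ v, T i v ∂P) = 0 := by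
    intro i
    have heq : ∀ v, T i v = χ (i : ℕ) v * stepf (v i) := by
      intro v
      simp only [hTdef, hχdef, Tfun_def]
      by_cases h : condC (m+1) z y (i : ℕ) v <;> simp [h]
    calc (∫ v, T i v ∂P) = ∫ v, χ (i : ℕ) v * stepf (v i) ∂P :=
          integral_congr_ae (Filter.Eventually.of_forall heq)
      _ = (∫ v, χ (i : ℕ) v ∂P) * ∫ p, stepf p ∂ν :=
          indep_eval_mul ν i (χ (i : ℕ)) stepf (hdep_chi i)
      _ = 0 := by rw [hm1, mul_zero]
  -- second moment of T
  have hTsq : ∀ i : Fin (m+1), (∫ v, T i v * T i v ∂P) = s2 * ∫ v, χ (i : ℕ) v ∂P := by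
    intro i
    have heq : ∀ v, T i v * T i v = χ (i : ℕ) v * stepf (v i) ^ 2 := by
      intro v
      simp only [hTdef, hχdef, Tfun_def]
      by_cases h : condC (m+1) z y (i : ℕ) v <;> simp [h, sq]
    calc (∫ v, T i v * T i v ∂P) = ∫ v, χ (i : ℕ) v * stepf (v i) ^ 2 ∂P :=
          integral_congr_ae (Filter.Eventually.of_forall heq)
      _ = (∫ v, χ (i : ℕ) v ∂P) * ∫ p, stepf p ^ 2 ∂ν :=
          indep_eval_mul ν i (χ (i : ℕ)) (fun p => stepf p ^ 2) (hdep_chi i)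
      _ = s2 * ∫ v, χ (i : ℕ) v ∂P := by rw [hm2]; exact mul_comm _ _
  -- cross moments vanish
  have hTcross : ∀ i j : Fin (m+1), (j : ℕ) < (i : ℕ) → (∫ v, T i v * T j v ∂P) = 0 := by
    intro i j hij
    have heq : ∀ v, T i v * T j v = (χ (i : ℕ) v * T j v) * stepf (v i) := by
      intro v
      simp only [hTdef, hχdef, Tfun_def]
      by_cases h : condC (m+1) z y (i : ℕ) v <;> simp [h] <;> ring
    calc (∫ v, T i v * T j v ∂P) = ∫ v, (χ (i : ℕ) v * T j v) * stepf (v i) ∂P :=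
          integral_congr_ae (Filter.Eventually.of_forall heq)
      _ = (∫ v, χ (i : ℕ) v * T j v ∂P) * ∫ p, stepf p ∂ν := by
          refine indep_eval_mul ν i (fun v => χ (i : ℕ) v * T j v) stepf ?_
          intro v w h
          show χ (i : ℕ) v * T j v = χ (i : ℕ) w * T j w
          rw [hdep_chi i v w h, hdep_T i j hij v w h]
      _ = 0 := by rw [hm1, mul_zero]
  -- mean of V
  have hV0 : (∫ v, V v ∂P) = 0 := by
    have : (∫ v, V v ∂P) = ∑ i : Fin (m+1), ∫ v, T i v ∂P := by
      rw [hVdef]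
      simp only [Vfun]
      exact integral_finset_sum _ fun i _ => hTint i
    rw [this]
    exact Finset.sum_eq_zero fun i _ => hT0 i
  -- second moment of V
  have hV2 : (∫ v, V v ^ 2 ∂P) = s2 * ∑ i : Fin (m+1), ∫ v, χ (i : ℕ) v ∂P := by
    have hexp : ∀ v, V v ^ 2 = ∑ i : Fin (m+1), ∑ j : Fin (m+1), T i v * T j v := by
      intro v
      rw [hVdef, Vfun, sq, Finset.sum_mul_sum]
    calc (∫ v, V v ^ 2 ∂P) = ∫ v, ∑ i : Fin (m+1), ∑ j : Fin (m+1), T i v * T j v ∂P :=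
          integral_congr_ae (Filter.Eventually.of_forall hexp)
      _ = ∑ i : Fin (m+1), ∫ v, ∑ j : Fin (m+1), T i v * T j v ∂P :=
          integral_finset_sum _ fun i _ => integrable_finset_sum _ fun j _ => hTTint i j
      _ = ∑ i : Fin (m+1), ∑ j : Fin (m+1), ∫ v, T i v * T j v ∂P :=
          Finset.sum_congr rfl fun i _ => integral_finset_sum _ fun j _ => hTTint i j
      _ = ∑ i : Fin (m+1), s2 * ∫ v, χ (i : ℕ) v ∂P := by
          refine Finset.sum_congr rfl fun i _ => ?_
          rw [Finset.sum_eq_single i]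
          · exact hTsq i
          · intro j _ hji
            have hji' : (j : ℕ) ≠ (i : ℕ) := fun hval => hji (Fin.ext hval)
            rcases lt_or_gt_of_ne hji' with hlt | hgt
            · exact hTcross i j hlt
            · calc (∫ v, T i v * T j v ∂P) = ∫ v, T j v * T i v ∂P :=
                  integral_congr_ae (Filter.Eventually.of_forall fun v => mul_comm _ _)
                _ = 0 := hTcross j i hgt
          · intro h
            exact absurd (Finset.mem_univ i) h
      _ = s2 * ∑ i : Fin (m+1), ∫ v, χ (i : ℕ) v ∂P := by rw [Finset.mul_sum]
  -- B is contained in each C i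
  have hBle : ∀ i : Fin (m+1), (∫ v, χ (m+1) v ∂P) ≤ ∫ v, χ (i : ℕ) v ∂P := by
    intro i
    refine integral_mono (hχint (m+1)) (hχint (i : ℕ)) fun v => ?_
    simp only [hχdef]
    by_cases h : condC (m+1) z y (m+1) v
    · have h' : condC (m+1) z y (i : ℕ) v := by
        intro k hk
        refine h k ?_
        rw [Finset.mem_Icc] at hk ⊢
        exact ⟨hk.1, le_trans hk.2 (le_of_lt i.isLt)⟩
      simp [h, h']
    · simp only [if_neg h]
      by_cases h' : condC (m+1) z y (i : ℕ) v <;> simp [h']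
  have hsum_ge : ((m+1 : ℕ) : ℝ) * (∫ v, χ (m+1) v ∂P)
      ≤ ∑ i : Fin (m+1), ∫ v, χ (i : ℕ) v ∂P := by
    calc ((m+1 : ℕ) : ℝ) * (∫ v, χ (m+1) v ∂P)
        = ∑ _i : Fin (m+1), ∫ v, χ (m+1) v ∂P := by
          simp [Finset.sum_const, nsmul_eq_mul]
      _ ≤ ∑ i : Fin (m+1), ∫ v, χ (i : ℕ) v ∂P := Finset.sum_le_sum fun i _ => hBle i
  -- a.e. bounds on V and the exit dichotomy
  have hz0 : (0:ℝ) ≤ z := le_of_lt hzpos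
  have haeV : ∀ᵐ v ∂P, (-(z + b) ≤ V v ∧ V v ≤ y + b) ∧
      ((∀ k ∈ Finset.Icc 1 (m+1), Ssum (m+1) k v ≤ y) →
        ¬(∀ k ∈ Finset.Icc 1 (m+1), -z ≤ Ssum (m+1) k v ∧ Ssum (m+1) k v ≤ y) →
        V v < -z) := by
    filter_upwards [haeP] with v hv
    exact V_bounds (m+1) (Nat.succ_pos m) z y b hz0 hy0 v hv
  -- second moment bound
  have hV2le : (∫ v, V v ^ 2 ∂P) ≤ (y + b) * (z + b) := by
    have hmono : ∀ᵐ v ∂P, V v ^ 2 ≤ ((y + b) - (z + b)) * V v + (y + b) * (z + b) := by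
      filter_upwards [haeV] with v hv
      nlinarith [hv.1.1, hv.1.2]
    have hrint : Integrable (fun v => ((y + b) - (z + b)) * V v + (y + b) * (z + b)) P :=
      (hVint.const_mul _).add (integrable_const _)
    calc (∫ v, V v ^ 2 ∂P)
        ≤ ∫ v, ((y + b) - (z + b)) * V v + (y + b) * (z + b) ∂P :=
          integral_mono_ae hV2int hrint hmono
      _ = ((y + b) - (z + b)) * (∫ v, V v ∂P) + (y + b) * (z + b) := by
          rw [integral_add (hVint.const_mul _) (integrable_const _), integral_const_mul,
            integral_const, probReal_univ]
          simp
      _ = (y + b) * (z + b) := by rw [hV0, mul_zero, zero_add]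
  -- bound on the B-probability
  have hIB : (∫ v, χ (m+1) v ∂P) ≤ (y + b) * (z + b) / (s2 * ((m+1 : ℕ) : ℝ)) := by
    have h3 : s2 * (((m+1 : ℕ) : ℝ) * ∫ v, χ (m+1) v ∂P) ≤ (y + b) * (z + b) := by
      calc s2 * (((m+1 : ℕ) : ℝ) * ∫ v, χ (m+1) v ∂P)
          ≤ s2 * ∑ i : Fin (m+1), ∫ v, χ (i : ℕ) v ∂P :=
            mul_le_mul_of_nonneg_left hsum_ge (le_of_lt hs2)
        _ = ∫ v, V v ^ 2 ∂P := hV2.symm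
        _ ≤ (y + b) * (z + b) := hV2le
    rw [le_div_iff₀ (by positivity)]
    calc (∫ v, χ (m+1) v ∂P) * (s2 * ((m+1 : ℕ) : ℝ))
        = s2 * (((m+1 : ℕ) : ℝ) * ∫ v, χ (m+1) v ∂P) := by ring
      _ ≤ (y + b) * (z + b) := h3
  -- the event that V exits below
  set χlt : (Fin (m+1) → ℝ × ℝ) → ℝ := fun v => if V v < -z then 1 else 0 with hχltdef
  have hχltmeas : Measurable χlt :=
    Measurable.ite (measurableSet_lt hVmeas measurable_const) measurable_const measurable_const
  have hχltint : Integrable χlt P := by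
    refine hint _ 1 hχltmeas (Filter.Eventually.of_forall fun v => ?_)
    simp only [hχltdef]
    by_cases h : V v < -z <;> simp [h]
  have hχltnn : 0 ≤ ∫ v, χlt v ∂P := by
    refine integral_nonneg fun v => ?_
    simp only [hχltdef]
    by_cases h : V v < -z <;> simp [h]
  have hIlt : (∫ v, χlt v ∂P) ≤ (y + b) / z := by
    have hmono : ∀ᵐ v ∂P, ((y + b) + z) * χlt v ≤ (y + b) - V v := by
      filter_upwards [haeV] with v hv
      simp only [hχltdef]
      by_cases h : V v < -z
      · rw [if_pos h, mul_one]
        linarith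
      · rw [if_neg h, mul_zero]
        linarith [hv.1.2]
    have hkey : ((y + b) + z) * (∫ v, χlt v ∂P) ≤ (y + b) := by
      calc ((y + b) + z) * (∫ v, χlt v ∂P) = ∫ v, ((y + b) + z) * χlt v ∂P :=
            (integral_const_mul _ _).symm
        _ ≤ ∫ v, (y + b) - V v ∂P :=
            integral_mono_ae (hχltint.const_mul _) ((integrable_const _).sub hVint) hmono
        _ = (y + b) - ∫ v, V v ∂P := by
            rw [integral_sub (integrable_const _) hVint, integral_const, probReal_univ]
            simp
        _ = y + b := by rw [hV0, sub_zero]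
    rw [le_div_iff₀ hzpos]
    calc (∫ v, χlt v ∂P) * z ≤ (∫ v, χlt v ∂P) * ((y + b) + z) := by
          have : (0:ℝ) ≤ ∫ v, χlt v ∂P := hχltnn
          nlinarith
      _ = ((y + b) + z) * (∫ v, χlt v ∂P) := mul_comm _ _
      _ ≤ y + b := hkey
  -- the A event
  set Aset : Set (Fin (m+1) → ℝ × ℝ) :=
    {v | ∀ k ∈ Finset.Icc 1 (m+1), Ssum (m+1) k v ≤ y} with hAdef
  have hAmeas : MeasurableSet Aset := by
    have h : Aset = ⋂ k ∈ (Finset.Icc 1 (m+1) : Finset ℕ), {v | Ssum (m+1) k v ≤ y} := by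
      ext v
      simp [hAdef]
    rw [h]
    exact MeasurableSet.biInter (Finset.Icc 1 (m+1)).countable_toSet fun k _ =>
      measurableSet_le (measurable_Ssum k) measurable_const
  have hχAint : Integrable (fun v => if v ∈ Aset then (1:ℝ) else 0) P := by
    refine hint _ 1 (Measurable.ite hAmeas measurable_const measurable_const)
      (Filter.Eventually.of_forall fun v => ?_)
    by_cases h : v ∈ Aset <;> simp [h]
  have hPA : (P Aset).toReal = ∫ v, (if v ∈ Aset then (1:ℝ) else 0) ∂P := by
    rw [← measureReal_def, ← integral_indicator_one hAmeas]
    refine integral_congr_ae (Filter.Eventually.of_forall fun v => ?_)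
    by_cases h : v ∈ Aset <;> simp [Set.indicator_apply, h]
  have hsplitA : (P Aset).toReal ≤ (∫ v, χ (m+1) v ∂P) + ∫ v, χlt v ∂P := by
    rw [hPA]
    have hmono : ∀ᵐ v ∂P, (if v ∈ Aset then (1:ℝ) else 0) ≤ χ (m+1) v + χlt v := by
      filter_upwards [haeV] with v hv
      by_cases hA : v ∈ Aset
      · rw [if_pos hA]
        by_cases hB : condC (m+1) z y (m+1) v
        · have h1 : χ (m+1) v = 1 := by simp only [hχdef]; exact if_pos hB
          have h2 : (0:ℝ) ≤ χlt v := by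
            simp only [hχltdef]; by_cases h : V v < -z <;> simp [h]
          linarith
        · have hVlt : V v < -z := hv.2 hA hB
          have h1 : χlt v = 1 := by simp only [hχltdef]; exact if_pos hVlt
          have h2 : (0:ℝ) ≤ χ (m+1) v := by
            simp only [hχdef]; by_cases h : condC (m+1) z y (m+1) v <;> simp [h]
          linarith
      · rw [if_neg hA]
        have h1 : (0:ℝ) ≤ χ (m+1) v := by
          simp only [hχdef]; by_cases h : condC (m+1) z y (m+1) v <;> simp [h]
        have h2 : (0:ℝ) ≤ χlt v := by
          simp only [hχltdef]; by_cases h : V v < -z <;> simp [h]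
        linarith
    calc (∫ v, (if v ∈ Aset then (1:ℝ) else 0) ∂P)
        ≤ ∫ v, χ (m+1) v + χlt v ∂P :=
          integral_mono_ae hχAint ((hχint (m+1)).add hχltint) hmono
      _ = (∫ v, χ (m+1) v ∂P) + ∫ v, χlt v ∂P := integral_add (hχint (m+1)) hχltint
  -- final arithmetic
  have hyb : y + b ≤ (1 + b) * y := by nlinarith
  have hzb : z + b ≤ (1 + b) * z := by nlinarith
  have hybnn : (0:ℝ) ≤ y + b := by linarith
  have hIB2 : (∫ v, χ (m+1) v ∂P) ≤ (1 + b) ^ 2 * y / (s2 * z) := by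
    refine le_trans hIB ?_
    rw [← hzsq]
    rw [div_le_div_iff₀ (by positivity) (by positivity)]
    have h1 : (y + b) * (z + b) ≤ ((1 + b) * y) * ((1 + b) * z) :=
      mul_le_mul hyb hzb (by linarith) (by positivity)
    calc (y + b) * (z + b) * (s2 * z)
        ≤ (((1 + b) * y) * ((1 + b) * z)) * (s2 * z) :=
          mul_le_mul_of_nonneg_right h1 (by positivity)
      _ = (1 + b) ^ 2 * y * (s2 * z ^ 2) := by ring
  have hIlt2 : (∫ v, χlt v ∂P) ≤ (1 + b) * y / z := by
    refine le_trans hIlt ?_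
    rw [div_le_div_iff₀ hzpos hzpos]
    nlinarith
  have hfinal : (P Aset).toReal ≤ ((1 + b) + (1 + b) ^ 2 / s2) * y / z := by
    have hsplit2 : ((1 + b) + (1 + b) ^ 2 / s2) * y / z
        = (1 + b) * y / z + (1 + b) ^ 2 * y / (s2 * z) := by
      field_simp
    rw [hsplit2]
    linarith [hsplitA, hIB2, hIlt2]
  exact hfinal

end SQA
end SQA


open SQA in
theorem symWalkProb_upper_bound (Q : QueueParams) :
    ∃ (C : ℝ) (δ : ℕ → ℝ), Filter.Tendsto δ Filter.atTop (nhds 0) ∧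
      ∀ j : ℕ, 1 ≤ j → ∀ y : ℝ, 1 ≤ y →
        Q.symWalkProb j y ≤ C * y * (j : ℝ) ^ (-(1 : ℝ) / 2) + δ j := by
  classical
  haveI := Q.μ_prob
  set b := Q.cp - Q.cm with hbdef
  have hb : 0 < b := sub_pos.2 Q.cm_lt_cp
  have hcp : 0 < Q.cp := lt_trans Q.cm_pos Q.cm_lt_cp
  set vr := ∫ x, (x - 1) ^ 2 ∂Q.μ with hvrdef
  have hvr : 0 < vr := Q.μ_var_pos
  -- a.e. membership in the support interval
  have hμcompl : Q.μ (Set.Icc Q.cm Q.cp)ᶜ = 0 := by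
    have h1 := measure_add_measure_compl (μ := Q.μ) (measurableSet_Icc (a := Q.cm) (b := Q.cp))
    rw [Q.μ_supp, measure_univ] at h1
    have h2 : (1 : ENNReal) + Q.μ (Set.Icc Q.cm Q.cp)ᶜ = 1 + 0 := by rw [add_zero]; exact h1
    exact (ENNReal.add_right_inj ENNReal.one_ne_top).1 h2
  have hμae : ∀ᵐ x ∂Q.μ, x ∈ Set.Icc Q.cm Q.cp := by
    refine ae_iff.2 ?_
    exact hμcompl
  have habs : ∀ᵐ x ∂Q.μ, |x| ≤ Q.cp := by
    filter_upwards [hμae] with x hx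
    rw [abs_le]
    exact ⟨by linarith [Q.cm_pos, hx.1], hx.2⟩
  have hintμ : ∀ (f : ℝ → ℝ) (C : ℝ), Measurable f → (∀ᵐ x ∂Q.μ, |f x| ≤ C) →
      Integrable f Q.μ := fun f C hf hC =>
    Integrable.mono' (integrable_const C) hf.aestronglyMeasurable
      (by simpa [Real.norm_eq_abs] using hC)
  have hint_id : Integrable (fun x : ℝ => x) Q.μ := hintμ _ Q.cp measurable_id habs
  have hint_sq : Integrable (fun x : ℝ => x ^ 2) Q.μ := by
    refine hintμ _ (Q.cp ^ 2) (measurable_id.pow_const 2) ?_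
    filter_upwards [habs] with x hx
    calc |x ^ 2| = |x| ^ 2 := abs_pow x 2
      _ ≤ Q.cp ^ 2 := pow_le_pow_left₀ (abs_nonneg x) hx 2
  have hsqint : (∫ x, x ^ 2 ∂Q.μ) = vr + 1 := by
    have hthis : vr = ∫ x, (x ^ 2 - 2 * x + 1) ∂Q.μ := by
      rw [hvrdef]
      exact integral_congr_ae (Filter.Eventually.of_forall fun x => by ring_nf)
    have hA : Integrable (fun x : ℝ => x ^ 2 - 2 * x) Q.μ := hint_sq.sub (hint_id.const_mul 2)
    have hB2 : Integrable (fun x : ℝ => 2 * x) Q.μ := hint_id.const_mul 2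
    rw [show (fun x : ℝ => x ^ 2 - 2 * x + 1) = fun x : ℝ => (x ^ 2 - 2 * x) + 1 from rfl,
      integral_add hA (integrable_const 1),
      integral_sub hint_sq hB2, integral_const_mul, Q.μ_mean,
      integral_const, probReal_univ] at hthis
    simp only [ENNReal.toReal_one, smul_eq_mul, one_mul, mul_one] at hthis
    linarith
  -- the product measure and its moments
  set ν := Q.μ.prod Q.μ with hνdef
  haveI : IsProbabilityMeasure ν := by rw [hνdef]; infer_instance
  have hνK : ν (Set.Icc Q.cm Q.cp ×ˢ Set.Icc Q.cm Q.cp) = 1 := by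
    rw [hνdef, Measure.prod_prod, Q.μ_supp, one_mul]
  have hνae : ∀ᵐ p ∂ν, p ∈ Set.Icc Q.cm Q.cp ×ˢ Set.Icc Q.cm Q.cp := by
    refine ae_iff.2 ?_
    have hmeas : MeasurableSet (Set.Icc Q.cm Q.cp ×ˢ Set.Icc Q.cm Q.cp) :=
      measurableSet_Icc.prod measurableSet_Icc
    have := measure_compl hmeas (measure_ne_top ν _)
    rw [hνK, measure_univ, tsub_self] at this
    exact this
  have hνabs : ∀ᵐ p ∂ν, |p.1| ≤ Q.cp ∧ |p.2| ≤ Q.cp := by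
    filter_upwards [hνae] with p hp
    obtain ⟨h1, h2⟩ := hp
    constructor
    · rw [abs_le]; exact ⟨by linarith [Q.cm_pos, h1.1], h1.2⟩
    · rw [abs_le]; exact ⟨by linarith [Q.cm_pos, h2.1], h2.2⟩
  have hintν : ∀ (f : ℝ × ℝ → ℝ) (C : ℝ), Measurable f → (∀ᵐ p ∂ν, |f p| ≤ C) →
      Integrable f ν := fun f C hf hC =>
    Integrable.mono' (integrable_const C) hf.aestronglyMeasurable
      (by simpa [Real.norm_eq_abs] using hC)
  have hint_fst : Integrable (fun p : ℝ × ℝ => p.1) ν :=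
    hintν _ Q.cp measurable_fst (by filter_upwards [hνabs] with p hp using hp.1)
  have hint_snd : Integrable (fun p : ℝ × ℝ => p.2) ν :=
    hintν _ Q.cp measurable_snd (by filter_upwards [hνabs] with p hp using hp.2)
  have hint_fstsq : Integrable (fun p : ℝ × ℝ => p.1 ^ 2) ν := by
    refine hintν _ (Q.cp ^ 2) (measurable_fst.pow_const 2) ?_
    filter_upwards [hνabs] with p hp
    calc |p.1 ^ 2| = |p.1| ^ 2 := abs_pow _ 2
      _ ≤ Q.cp ^ 2 := pow_le_pow_left₀ (abs_nonneg _) hp.1 2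
  have hint_sndsq : Integrable (fun p : ℝ × ℝ => p.2 ^ 2) ν := by
    refine hintν _ (Q.cp ^ 2) (measurable_snd.pow_const 2) ?_
    filter_upwards [hνabs] with p hp
    calc |p.2 ^ 2| = |p.2| ^ 2 := abs_pow _ 2
      _ ≤ Q.cp ^ 2 := pow_le_pow_left₀ (abs_nonneg _) hp.2 2
  have hint_mul : Integrable (fun p : ℝ × ℝ => p.1 * p.2) ν := by
    refine hintν _ (Q.cp * Q.cp) (measurable_fst.mul measurable_snd) ?_
    filter_upwards [hνabs] with p hp
    rw [abs_mul]
    exact mul_le_mul hp.1 hp.2 (abs_nonneg _) (le_of_lt hcp)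
  have e1 : (∫ p, p.1 ∂ν) = 1 := by
    have h := integral_prod_mul (μ := Q.μ) (ν := Q.μ) (fun x : ℝ => x) (fun _ : ℝ => (1:ℝ))
    simp only [mul_one, integral_const, probReal_univ, ENNReal.toReal_one, smul_eq_mul,
      one_mul, Q.μ_mean] at h
    rw [hνdef]
    exact h
  have e2 : (∫ p, p.2 ∂ν) = 1 := by
    have h := integral_prod_mul (μ := Q.μ) (ν := Q.μ) (fun _ : ℝ => (1:ℝ)) (fun x : ℝ => x)
    simp only [one_mul, integral_const, probReal_univ, ENNReal.toReal_one, smul_eq_mul,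
      mul_one, Q.μ_mean] at h
    rw [hνdef]
    exact h
  have e12 : (∫ p, p.1 * p.2 ∂ν) = 1 := by
    have h := integral_prod_mul (μ := Q.μ) (ν := Q.μ) (fun x : ℝ => x) (fun x : ℝ => x)
    rw [Q.μ_mean, mul_one] at h
    rw [hνdef]
    exact h
  have esq1 : (∫ p, p.1 ^ 2 ∂ν) = vr + 1 := by
    have h := integral_prod_mul (μ := Q.μ) (ν := Q.μ) (fun x : ℝ => x ^ 2) (fun _ : ℝ => (1:ℝ))
    simp only [mul_one, integral_const, probReal_univ, ENNReal.toReal_one, smul_eq_mul,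
      one_mul] at h
    rw [hsqint] at h
    rw [hνdef]
    exact h
  have esq2 : (∫ p, p.2 ^ 2 ∂ν) = vr + 1 := by
    have h := integral_prod_mul (μ := Q.μ) (ν := Q.μ) (fun _ : ℝ => (1:ℝ)) (fun x : ℝ => x ^ 2)
    simp only [one_mul, integral_const, probReal_univ, ENNReal.toReal_one, smul_eq_mul,
      mul_one] at h
    rw [hsqint] at h
    rw [hνdef]
    exact h
  -- step moments
  have hm1 : (∫ p, stepf p ∂ν) = 0 := by
    have : (∫ p, stepf p ∂ν) = (∫ p, (fun q : ℝ × ℝ => q.1) p ∂ν) - ∫ p, (fun q : ℝ × ℝ => q.2) p ∂ν :=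
      integral_sub hint_fst hint_snd
    rw [this, e1, e2, sub_self]
  have hm2 : (∫ p, stepf p ^ 2 ∂ν) = 2 * vr := by
    have hexp : ∀ p : ℝ × ℝ, stepf p ^ 2 = p.1 ^ 2 - 2 * (p.1 * p.2) + p.2 ^ 2 := by
      intro p
      show (p.1 - p.2) ^ 2 = _
      ring
    calc (∫ p, stepf p ^ 2 ∂ν) = ∫ p, (p.1 ^ 2 - 2 * (p.1 * p.2) + p.2 ^ 2) ∂ν :=
          integral_congr_ae (Filter.Eventually.of_forall hexp)
      _ = (∫ p, (p.1 ^ 2 - 2 * (p.1 * p.2)) ∂ν) + ∫ p, p.2 ^ 2 ∂ν := by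
          have hA : Integrable (fun p : ℝ × ℝ => p.1 ^ 2 - 2 * (p.1 * p.2)) ν :=
            hint_fstsq.sub (hint_mul.const_mul 2)
          exact integral_add hA hint_sndsq
      _ = ((∫ p, p.1 ^ 2 ∂ν) - ∫ p, 2 * (p.1 * p.2) ∂ν) + ∫ p, p.2 ^ 2 ∂ν := by
          have hB2 : Integrable (fun p : ℝ × ℝ => 2 * (p.1 * p.2)) ν := hint_mul.const_mul 2
          rw [integral_sub hint_fstsq hB2]
      _ = ((vr + 1) - 2 * 1) + (vr + 1) := by
          rw [esq1, esq2, integral_const_mul, e12]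
      _ = 2 * vr := by ring
  -- a.e. step bound
  have hνstep : ∀ᵐ p ∂ν, |stepf p| ≤ b := by
    filter_upwards [hνae] with p hp
    obtain ⟨h1, h2⟩ := hp
    rw [hbdef, abs_le]
    constructor
    · show -(Q.cp - Q.cm) ≤ p.1 - p.2
      linarith [h1.1, h2.2]
    · show p.1 - p.2 ≤ Q.cp - Q.cm
      linarith [h1.2, h2.1]
  -- conclusion
  refine ⟨(1 + b) + (1 + b) ^ 2 / (2 * vr), fun _ => 0, tendsto_const_nhds, ?_⟩
  intro j hj y hy
  have key := walk_bound ν b (2 * vr) hb (by positivity) hνstep hm1 hm2 j hj y hy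
  have hrpow : ((j : ℝ)) ^ (-(1 : ℝ) / 2) = (Real.sqrt (j : ℝ))⁻¹ := by
    rw [neg_div, Real.rpow_neg (Nat.cast_nonneg j), Real.sqrt_eq_rpow]
  have hq : Q.symWalkProb j y = ((Measure.pi fun _ : Fin j => ν)
      {v : Fin j → ℝ × ℝ | ∀ k ∈ Finset.Icc 1 j, Ssum j k v ≤ y}).toReal := by
    rw [QueueParams.symWalkProb, hνdef]
    rfl
  rw [hq, hrpow, add_zero, mul_assoc, ← div_eq_mul_inv, ← mul_div_assoc]
  exact key
end
end

section
/- Let (ξ_i)_{i≥1} be i.i.d. with law μ. Fix an integer j ≥ 1, a real y, and reals a_1, …, a_j, and suppose the event E = { Σ_{i=1}^{k} ξ_i < a_k for all 1 ≤ k ≤ j } has positive probability. Then P( (ξ_1, …, ξ_j) is (j,y)-good | E ) ≥ 1/2. (This is the content of the paper's Lemma 2: conditionally on a long wave having just occurred, with probability at least 1/2 the new inter-customer spacings form a (j,y)-good sequence.) -/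
open MeasureTheory ProbabilityTheory Filter

noncomputable section

section HarrisAux

lemma queueAux_integrable01 {α : Type*} [MeasurableSpace α] (μ : Measure α) [IsFiniteMeasure μ]
    {f : α → ℝ} (hf : Measurable f) (h0 : ∀ x, 0 ≤ f x) (h1 : ∀ x, f x ≤ 1) :
    Integrable f μ := by
  refine ⟨hf.aestronglyMeasurable, ?_⟩
  refine HasFiniteIntegral.of_bounded (C := 1) ?_
  filter_upwards with x
  rw [Real.norm_eq_abs, abs_le]
  exact ⟨by linarith [h0 x], h1 x⟩

lemma queueAux_harris_dim1 (μ : Measure ℝ) [IsProbabilityMeasure μ]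
    {f g : ℝ → ℝ} (hf : Measurable f) (hg : Measurable g)
    (hfm : Monotone f) (hgm : Antitone g)
    (hf0 : ∀ x, 0 ≤ f x) (hf1 : ∀ x, f x ≤ 1)
    (hg0 : ∀ x, 0 ≤ g x) (hg1 : ∀ x, g x ≤ 1) :
    ∫ x, f x * g x ∂μ ≤ (∫ x, f x ∂μ) * ∫ x, g x ∂μ := by
  have hif : Integrable f μ := queueAux_integrable01 μ hf hf0 hf1
  have hig : Integrable g μ := queueAux_integrable01 μ hg hg0 hg1
  have hifg : Integrable (fun x => f x * g x) μ :=
    queueAux_integrable01 μ (hf.mul hg) (fun x => mul_nonneg (hf0 x) (hg0 x))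
      (fun x => mul_le_one₀ (hf1 x) (hg0 x) (hg1 x))
  set A := ∫ x, f x ∂μ with hA
  set B := ∫ x, g x ∂μ with hB
  set C := ∫ x, f x * g x ∂μ with hC
  have inner : ∀ y : ℝ, ∫ x, (f x - f y) * (g x - g y) ∂μ
      = C - A * g y - f y * B + f y * g y := by
    intro y
    have i2 : Integrable (fun x => f x * g x - f x * g y) μ := hifg.sub (hif.mul_const _)
    have i3 : Integrable (fun x => f y * g x) μ := hig.const_mul _
    have i1 : Integrable (fun x => f x * g x - f x * g y - f y * g x) μ := i2.sub i3
    have i4 : Integrable (fun x => f x * g y) μ := hif.mul_const _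
    have h1' : (fun x => (f x - f y) * (g x - g y))
        = fun x => (f x * g x - f x * g y - f y * g x) + f y * g y := by
      funext x; ring
    rw [h1', integral_add i1 (integrable_const _), integral_sub i2 i3,
      integral_sub hifg i4, integral_mul_const _ _, integral_const_mul _ _, integral_const]
    simp only [measure_univ, ENNReal.toReal_one, smul_eq_mul, one_mul, probReal_univ]
    rfl
  have nonpos : ∫ y, ∫ x, (f x - f y) * (g x - g y) ∂μ ∂μ ≤ 0 := by
    refine integral_nonpos fun y => integral_nonpos fun x => ?_
    rcases le_total x y with h | h
    · exact mul_nonpos_of_nonpos_of_nonneg (by linarith [hfm h]) (by linarith [hgm h])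
    · exact mul_nonpos_of_nonneg_of_nonpos (by linarith [hfm h]) (by linarith [hgm h])
  have outer : ∫ y, ∫ x, (f x - f y) * (g x - g y) ∂μ ∂μ = 2 * C - 2 * (A * B) := by
    have i2 : Integrable (fun y => C - A * g y) μ := (integrable_const _).sub (hig.const_mul _)
    have i3 : Integrable (fun y => f y * B) μ := hif.mul_const _
    have i1 : Integrable (fun y => C - A * g y - f y * B) μ := i2.sub i3
    have h1' : (fun y => ∫ x, (f x - f y) * (g x - g y) ∂μ)
        = fun y => (C - A * g y - f y * B) + f y * g y := by
      funext y; rw [inner y]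
    rw [h1', integral_add i1 hifg, integral_sub i2 i3, integral_sub (integrable_const _)
      (hig.const_mul _), integral_mul_const _ _, integral_const_mul _ _, integral_const]
    simp only [measure_univ, ENNReal.toReal_one, smul_eq_mul, one_mul, probReal_univ, ← hA, ← hB, ← hC]
    ring
  linarith [outer ▸ nonpos]

lemma queueAux_cons_mono {n : ℕ} {t t' : ℝ} (ht : t ≤ t') {x x' : Fin n → ℝ} (hx : x ≤ x') :
    (Fin.cons t x : Fin (n+1) → ℝ) ≤ Fin.cons t' x' := by
  intro i
  refine Fin.cases ?_ (fun i => ?_) i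
  · simpa using ht
  · simpa using hx i

lemma queueAux_harris_pi (μ : Measure ℝ) [IsProbabilityMeasure μ] : ∀ (n : ℕ)
    (f g : (Fin n → ℝ) → ℝ), Measurable f → Measurable g →
    Monotone f → Antitone g →
    (∀ x, 0 ≤ f x) → (∀ x, f x ≤ 1) → (∀ x, 0 ≤ g x) → (∀ x, g x ≤ 1) →
    ∫ x, f x * g x ∂(Measure.pi fun _ => μ)
      ≤ (∫ x, f x ∂(Measure.pi fun _ => μ)) * ∫ x, g x ∂(Measure.pi fun _ => μ) := by
  intro n
  induction n with
  | zero =>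
    intro f g _ _ _ _ _ _ _ _
    simp [integral_unique, measure_univ]
  | succ n ih =>
    intro f g hf hg hfm hgm hf0 hf1 hg0 hg1
    set ν : Measure (Fin n → ℝ) := Measure.pi fun _ => μ with hν
    set π : Measure (Fin (n+1) → ℝ) := Measure.pi fun _ => μ with hπ
    have mp : MeasurePreserving
        (MeasurableEquiv.piFinSuccAbove (fun _ : Fin (n+1) => ℝ) 0) π (μ.prod ν) :=
      measurePreserving_piFinSuccAbove (fun _ => μ) 0
    set e := MeasurableEquiv.piFinSuccAbove (fun _ : Fin (n+1) => ℝ) 0 with he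
    have hesymm : ∀ (t : ℝ) (x : Fin n → ℝ), e.symm (t, x) = Fin.cons t x := by
      intro t x
      simp [he, MeasurableEquiv.piFinSuccAbove_symm_apply, Fin.insertNth_zero', Fin.consEquiv]
    have hconsmeas : ∀ t : ℝ,
        Measurable (fun x : Fin n → ℝ => (Fin.cons t x : Fin (n+1) → ℝ)) := by
      intro t
      refine measurable_pi_lambda _ (fun i => ?_)
      refine Fin.cases ?_ (fun j => ?_) i
      · simpa using measurable_const
      · simpa using measurable_pi_apply j
    have key : ∀ h : (Fin (n+1) → ℝ) → ℝ, Measurable h → (∀ x, 0 ≤ h x) → (∀ x, h x ≤ 1) →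
        ∫ x, h x ∂π = ∫ t, ∫ x, h (Fin.cons t x) ∂ν ∂μ := by
      intro h hh hh0 hh1
      have h1 : ∫ x, h x ∂π = ∫ p, h (e.symm p) ∂(μ.prod ν) := by
        rw [← (mp.symm e).map_eq, integral_map e.symm.measurable.aemeasurable
          hh.aestronglyMeasurable]
      have hint : Integrable (fun p : ℝ × (Fin n → ℝ) => h (e.symm p)) (μ.prod ν) :=
        queueAux_integrable01 _ (hh.comp e.symm.measurable) (fun p => hh0 _) (fun p => hh1 _)
      rw [h1, integral_prod _ hint]
      simp_rw [hesymm]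
    have innerMeas : ∀ h : (Fin (n+1) → ℝ) → ℝ, Measurable h →
        Measurable (fun t => ∫ x, h (Fin.cons t x) ∂ν) := by
      intro h hh
      have h2 : StronglyMeasurable fun p : ℝ × (Fin n → ℝ) => h (e.symm p) :=
        (hh.comp e.symm.measurable).stronglyMeasurable
      have h3 := h2.integral_prod_right' (ν := ν)
      simp_rw [hesymm] at h3
      exact h3.measurable
    have innerInt : ∀ (h : (Fin n → ℝ) → ℝ), Measurable h → (∀ x, 0 ≤ h x) → (∀ x, h x ≤ 1) →
        Integrable h ν := fun h hh h0 h1 => queueAux_integrable01 _ hh h0 h1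
    set F := fun t => ∫ x, f (Fin.cons t x) ∂ν with hF
    set G := fun t => ∫ x, g (Fin.cons t x) ∂ν with hG
    have hFbd : ∀ t, 0 ≤ F t ∧ F t ≤ 1 := by
      intro t
      constructor
      · exact integral_nonneg fun x => hf0 _
      · calc ∫ x, f (Fin.cons t x) ∂ν ≤ ∫ _, (1:ℝ) ∂ν :=
              integral_mono (innerInt _ (hf.comp (hconsmeas t)) (fun x => hf0 _)
                (fun x => hf1 _)) (integrable_const _) (fun x => hf1 _)
          _ = 1 := by simp [measure_univ]
    have hGbd : ∀ t, 0 ≤ G t ∧ G t ≤ 1 := by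
      intro t
      constructor
      · exact integral_nonneg fun x => hg0 _
      · calc ∫ x, g (Fin.cons t x) ∂ν ≤ ∫ _, (1:ℝ) ∂ν :=
              integral_mono (innerInt _ (hg.comp (hconsmeas t)) (fun x => hg0 _)
                (fun x => hg1 _)) (integrable_const _) (fun x => hg1 _)
          _ = 1 := by simp [measure_univ]
    have hFmono : Monotone F := by
      intro t t' ht
      exact integral_mono (innerInt _ (hf.comp (hconsmeas t)) (fun x => hf0 _) (fun x => hf1 _))
        (innerInt _ (hf.comp (hconsmeas t')) (fun x => hf0 _) (fun x => hf1 _))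
        (fun x => hfm (queueAux_cons_mono ht le_rfl))
    have hGanti : Antitone G := by
      intro t t' ht
      exact integral_mono (innerInt _ (hg.comp (hconsmeas t')) (fun x => hg0 _) (fun x => hg1 _))
        (innerInt _ (hg.comp (hconsmeas t)) (fun x => hg0 _) (fun x => hg1 _))
        (fun x => hgm (queueAux_cons_mono ht le_rfl))
    have hfg0 : ∀ x, 0 ≤ f x * g x := fun x => mul_nonneg (hf0 x) (hg0 x)
    have hfg1 : ∀ x, f x * g x ≤ 1 := fun x => mul_le_one₀ (hf1 x) (hg0 x) (hg1 x)
    calc ∫ x, f x * g x ∂π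
        = ∫ t, ∫ x, f (Fin.cons t x) * g (Fin.cons t x) ∂ν ∂μ :=
          key _ (hf.mul hg) hfg0 hfg1
      _ ≤ ∫ t, F t * G t ∂μ := by
          refine integral_mono (queueAux_integrable01 _ (innerMeas _ (hf.mul hg)) ?_ ?_)
            (queueAux_integrable01 _ ((innerMeas _ hf).mul (innerMeas _ hg)) ?_ ?_) ?_
          · exact fun t => integral_nonneg fun x => hfg0 _
          · intro t
            calc ∫ x, f (Fin.cons t x) * g (Fin.cons t x) ∂ν ≤ ∫ _, (1:ℝ) ∂ν :=
                  integral_mono (innerInt _ ((hf.mul hg).comp (hconsmeas t))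
                    (fun x => hfg0 _) (fun x => hfg1 _)) (integrable_const _) (fun x => hfg1 _)
              _ = 1 := by simp [measure_univ]
          · exact fun t => mul_nonneg (hFbd t).1 (hGbd t).1
          · exact fun t => mul_le_one₀ (hFbd t).2 (hGbd t).1 (hGbd t).2
          · intro t
            exact ih (fun x => f (Fin.cons t x)) (fun x => g (Fin.cons t x))
              (hf.comp (hconsmeas t)) (hg.comp (hconsmeas t))
              (fun x x' hx => hfm (queueAux_cons_mono le_rfl hx))
              (fun x x' hx => hgm (queueAux_cons_mono le_rfl hx))
              (fun x => hf0 _) (fun x => hf1 _) (fun x => hg0 _) (fun x => hg1 _)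
      _ ≤ (∫ t, F t ∂μ) * ∫ t, G t ∂μ :=
          queueAux_harris_dim1 μ (innerMeas _ hf) (innerMeas _ hg) hFmono hGanti
            (fun t => (hFbd t).1) (fun t => (hFbd t).2) (fun t => (hGbd t).1)
            (fun t => (hGbd t).2)
      _ = (∫ x, f x ∂π) * ∫ x, g x ∂π := by
          rw [← key f hf hf0 hf1, ← key g hg hg0 hg1]

end HarrisAux


theorem prob_good_given_wave_ge_half (Q : QueueParams) (Ω : Type) [MeasurableSpace Ω]
    (P : Measure Ω) (hP : IsProbabilityMeasure P)
    (ξ : ℕ → Ω → ℝ) (hmeas : ∀ i, 1 ≤ i → Measurable (ξ i))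
    (hlaw : ∀ i, 1 ≤ i → P.map (ξ i) = Q.μ)
    (hindep : ProbabilityTheory.iIndepFun
      (fun i : ℕ => ξ (i + 1)) P)
    (j : ℕ) (hj : 1 ≤ j) (y : ℝ) (a : ℕ → ℝ)
    (hpos : 0 < P {ω | ∀ k ∈ Finset.Icc 1 j, (∑ i ∈ Finset.Icc 1 k, ξ i ω) < a k}) :
    1 / 2 ≤ ((ProbabilityTheory.cond P
        {ω | ∀ k ∈ Finset.Icc 1 j, (∑ i ∈ Finset.Icc 1 k, ξ i ω) < a k})
      {ω | Q.IsGood j y (fun i => ξ i ω)}).toReal := by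
    classical
  haveI := Q.μ_prob
  haveI := hP
  set ν : Measure (Fin j → ℝ) := Measure.pi fun _ => Q.μ with hνdef
  haveI : IsProbabilityMeasure ν := by
    rw [hνdef]; infer_instance
  set Φ : Ω → (Fin j → ℝ) := fun ω (i : Fin j) => ξ ((i : ℕ) + 1) ω with hΦdef
  have hΦ : Measurable Φ :=
    measurable_pi_lambda _ fun i => hmeas _ (Nat.succ_le_succ (Nat.zero_le _))
  set Ssum : ℕ → (Fin j → ℝ) → ℝ :=
    fun k u => ∑ i ∈ Finset.univ.filter (fun i : Fin j => (i : ℕ) < k), u i with hSsumdef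
  have hSmeas : ∀ k, Measurable (Ssum k) :=
    fun k => Finset.measurable_sum _ fun i _ => measurable_pi_apply i
  have hSmono : ∀ k, Monotone (Ssum k) :=
    fun k u u' hu => Finset.sum_le_sum fun i _ => hu i
  have hsum : ∀ (h : ℕ → ℝ) (k : ℕ), k ≤ j →
      (∑ i ∈ Finset.univ.filter (fun i : Fin j => (i : ℕ) < k), h ((i : ℕ) + 1))
        = ∑ i ∈ Finset.Icc 1 k, h i := by
    intro h k hk
    rw [Finset.sum_filter, Fin.sum_univ_eq_sum_range (fun m => if m < k then h (m + 1) else 0) j,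
      ← Finset.sum_filter]
    have h2 : (Finset.range j).filter (fun m => m < k) = Finset.range k := by
      ext m; simp only [Finset.mem_filter, Finset.mem_range]; omega
    have h3 : ∑ i ∈ Finset.Icc 1 k, h i = ∑ m ∈ Finset.range k, h (m + 1) := by
      rw [← Finset.Ico_add_one_right_eq_Icc, Finset.sum_Ico_eq_sum_range]
      simp [add_comm]
    rw [h2, h3]
  set Dset : Set ((Fin j → ℝ) × (Fin j → ℝ)) :=
    {p | ∀ k ∈ Finset.Icc 1 j, Ssum k p.2 ≤ y + Ssum k p.1} with hDdef
  have hDmeas : MeasurableSet Dset := by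
    have hD2 : Dset = ⋂ k, ⋂ (_ : k ∈ Finset.Icc 1 j),
        {p : (Fin j → ℝ) × (Fin j → ℝ) | Ssum k p.2 ≤ y + Ssum k p.1} := by
      ext p; simp [hDdef]
    rw [hD2]
    exact MeasurableSet.iInter fun k => MeasurableSet.iInter fun _ =>
      measurableSet_le ((hSmeas k).comp measurable_snd)
        (measurable_const.add ((hSmeas k).comp measurable_fst))
  set gE : (Fin j → ℝ) → ENNReal := fun u => ν (Prod.mk u ⁻¹' Dset) with hgEdef
  have hgEmeas : Measurable gE := measurable_measure_prodMk_left hDmeas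
  have hgEle : ∀ u, gE u ≤ 1 := fun u => prob_le_one
  set f0 : (Fin j → ℝ) → ℝ := fun u => (gE u).toReal with hf0def
  have hf0meas : Measurable f0 := hgEmeas.ennreal_toReal
  have hf0nonneg : ∀ u, 0 ≤ f0 u := fun u => ENNReal.toReal_nonneg
  have hf0le : ∀ u, f0 u ≤ 1 := by
    intro u
    have h := ENNReal.toReal_mono (by simp) (hgEle u)
    simpa using h
  have hf0mono : Monotone f0 := by
    intro u u' huu
    refine ENNReal.toReal_mono (measure_ne_top _ _) (measure_mono ?_)
    intro v hv k hk
    exact le_trans (hv k hk) (by have := hSmono k huu; linarith)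
  set qL : ENNReal := ∫⁻ u, gE u ∂ν with hqLdef
  have hqLle : qL ≤ 1 := by
    rw [hqLdef]
    calc ∫⁻ u, gE u ∂ν ≤ ∫⁻ _, 1 ∂ν := lintegral_mono fun u => hgEle u
      _ = 1 := by simp [measure_univ]
  have hqLtop : qL ≠ ⊤ := (lt_of_le_of_lt hqLle ENNReal.one_lt_top).ne
  -- identification of the symmetrized walk probability
  have hsym : Q.symWalkProb j y = qL.toReal := by
    show ((Measure.pi fun _ : Fin j => Q.μ.prod Q.μ)
      {v : Fin j → ℝ × ℝ | ∀ k ∈ Finset.Icc 1 j,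
        (∑ i ∈ Finset.univ.filter (fun i : Fin j => (i : ℕ) < k), ((v i).1 - (v i).2)) ≤ y}).toReal
      = qL.toReal
    congr 1
    set Sset : Set ((Fin j → ℝ) × (Fin j → ℝ)) :=
      {p | ∀ k ∈ Finset.Icc 1 j, Ssum k p.1 - Ssum k p.2 ≤ y} with hSsetdef
    have hSsetmeas : MeasurableSet Sset := by
      have hS2 : Sset = ⋂ k, ⋂ (_ : k ∈ Finset.Icc 1 j),
          {p : (Fin j → ℝ) × (Fin j → ℝ) | Ssum k p.1 - Ssum k p.2 ≤ y} := by
        ext p; simp [hSsetdef]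
      rw [hS2]
      exact MeasurableSet.iInter fun k => MeasurableSet.iInter fun _ =>
        measurableSet_le (((hSmeas k).comp measurable_fst).sub ((hSmeas k).comp measurable_snd))
          measurable_const
    have mpe := measurePreserving_arrowProdEquivProdArrow ℝ ℝ (Fin j)
      (fun _ => Q.μ) (fun _ => Q.μ)
    have step1 : (Measure.pi fun _ : Fin j => Q.μ.prod Q.μ)
        {v : Fin j → ℝ × ℝ | ∀ k ∈ Finset.Icc 1 j,
          (∑ i ∈ Finset.univ.filter (fun i : Fin j => (i : ℕ) < k), ((v i).1 - (v i).2)) ≤ y}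
        = (ν.prod ν) Sset := by
      rw [← mpe.map_eq, Measure.map_apply (MeasurableEquiv.measurable _) hSsetmeas]
      congr 1
      ext v
      simp only [Set.mem_preimage, Set.mem_setOf_eq, hSsetdef, hSsumdef,
        MeasurableEquiv.arrowProdEquivProdArrow, Equiv.arrowProdEquivProdArrow,
        MeasurableEquiv.coe_mk, Equiv.coe_fn_mk]
      refine forall₂_congr fun k hk => ?_
      rw [Finset.sum_sub_distrib]
    have step2 : (ν.prod ν) Sset = (ν.prod ν) Dset := by
      have hswap : Prod.swap ⁻¹' Sset = Dset := by
        ext p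
        simp only [Set.mem_preimage, Set.mem_setOf_eq, hSsetdef, hDdef, Prod.fst_swap,
          Prod.snd_swap]
        refine forall₂_congr fun k hk => ?_
        constructor <;> intro h <;> linarith
      calc (ν.prod ν) Sset = (Measure.map Prod.swap (ν.prod ν)) Sset := by
            rw [Measure.prod_swap]
        _ = (ν.prod ν) (Prod.swap ⁻¹' Sset) := Measure.map_apply measurable_swap hSsetmeas
        _ = (ν.prod ν) Dset := by rw [hswap]
    have step3 : (ν.prod ν) Dset = qL := by
      rw [Measure.prod_apply hDmeas, hqLdef]
    rw [step1, step2, step3]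
  -- the events on the coordinate space
  set Eset : Set (Fin j → ℝ) := {u | ∀ k ∈ Finset.Icc 1 j, Ssum k u < a k} with hEdef
  have hEmeasS : MeasurableSet Eset := by
    have hE2 : Eset = ⋂ k, ⋂ (_ : k ∈ Finset.Icc 1 j), {u | Ssum k u < a k} := by
      ext u; simp [hEdef]
    rw [hE2]
    exact MeasurableSet.iInter fun k => MeasurableSet.iInter fun _ =>
      measurableSet_lt (hSmeas k) measurable_const
  have hElower : ∀ u u', u ≤ u' → u' ∈ Eset → u ∈ Eset := by
    intro u u' huu hu' k hk
    exact lt_of_le_of_lt (hSmono k huu) (hu' k hk)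
  set Gset : Set (Fin j → ℝ) := {u | f0 u ≤ 2 * Q.symWalkProb j y} with hGdef
  have hGmeasS : MeasurableSet Gset := measurableSet_le hf0meas measurable_const
  have hEext : {ω | ∀ k ∈ Finset.Icc 1 j, (∑ i ∈ Finset.Icc 1 k, ξ i ω) < a k}
      = Φ ⁻¹' Eset := by
    ext ω
    simp only [Set.mem_setOf_eq, Set.mem_preimage, hEdef, hSsumdef, hΦdef]
    refine forall₂_congr fun k hk => ?_
    rw [← hsum (fun i => ξ i ω) k (Finset.mem_Icc.mp hk).2]
  have hcondeq : ∀ ω, Q.condWalkProb j y (fun i => ξ i ω) = f0 (Φ ω) := by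
    intro ω
    have hseteq : {v : Fin j → ℝ | ∀ k ∈ Finset.Icc 1 j,
        (∑ i ∈ Finset.univ.filter (fun i : Fin j => (i : ℕ) < k), v i)
          - (∑ i ∈ Finset.Icc 1 k, ξ i ω) ≤ y} = Prod.mk (Φ ω) ⁻¹' Dset := by
      ext v
      simp only [Set.mem_setOf_eq, Set.mem_preimage, hDdef, hSsumdef, hΦdef]
      refine forall₂_congr fun k hk => ?_
      rw [← hsum (fun i => ξ i ω) k (Finset.mem_Icc.mp hk).2]
      constructor <;> intro h <;> linarith
    show ((Measure.pi fun _ : Fin j => Q.μ)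
      {v : Fin j → ℝ | ∀ k ∈ Finset.Icc 1 j,
        (∑ i ∈ Finset.univ.filter (fun i : Fin j => (i : ℕ) < k), v i)
          - (∑ i ∈ Finset.Icc 1 k, ξ i ω) ≤ y}).toReal = (ν (Prod.mk (Φ ω) ⁻¹' Dset)).toReal
    rw [hseteq]
  have hGext : {ω | Q.IsGood j y (fun i => ξ i ω)} = Φ ⁻¹' Gset := by
    ext ω
    simp only [Set.mem_setOf_eq, Set.mem_preimage, hGdef, QueueParams.IsGood]
    rw [hcondeq ω]
  -- the joint law of the first j spacings
  have hmap : P.map Φ = ν := by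
    rw [hνdef]
    refine (Measure.pi_eq fun s hs => ?_).symm
    rw [Measure.map_apply hΦ (MeasurableSet.univ_pi hs)]
    set s' : ℕ → Set ℝ := fun n => if h : n < j then s ⟨n, h⟩ else Set.univ with hs'def
    have hs'meas : ∀ n, MeasurableSet (s' n) := by
      intro n
      rw [hs'def]
      dsimp only
      split_ifs with h
      · exact hs _
      · exact MeasurableSet.univ
    have hpre : Φ ⁻¹' Set.univ.pi s = ⋂ n ∈ Finset.range j, (fun ω => ξ (n + 1) ω) ⁻¹' s' n := by
      ext ω
      simp only [Set.mem_preimage, Set.mem_univ_pi, Set.mem_iInter, Finset.mem_range, hΦdef,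
        hs'def]
      constructor
      · intro h n hn
        simp only [dif_pos hn]
        exact h ⟨n, hn⟩
      · intro h i
        have h2 := h i i.isLt
        simpa only [dif_pos i.isLt] using h2
    rw [hpre]
    have hindep2 := hindep.measure_inter_preimage_eq_mul (S := Finset.range j) (sets := s')
      (fun n _ => hs'meas n)
    rw [hindep2]
    have hone : ∀ n ∈ Finset.range j, P ((fun ω => ξ (n + 1) ω) ⁻¹' s' n) = Q.μ (s' n) := by
      intro n _
      rw [← hlaw (n + 1) (Nat.succ_le_succ (Nat.zero_le _)),
        Measure.map_apply (hmeas (n + 1) (Nat.succ_le_succ (Nat.zero_le _))) (hs'meas n)]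
    rw [Finset.prod_congr rfl hone, ← Fin.prod_univ_eq_prod_range (fun n => Q.μ (s' n)) j]
    refine Finset.prod_congr rfl fun i _ => ?_
    simp only [hs'def, dif_pos i.isLt]
  have hPfin : ∀ s : Set (Fin j → ℝ), MeasurableSet s → P (Φ ⁻¹' s) = ν s := by
    intro s hs
    rw [← Measure.map_apply hΦ hs, hmap]
  -- Harris inequality and the Markov bound
  set ind : (Fin j → ℝ) → ℝ := Set.indicator Eset (fun _ => (1 : ℝ)) with hinddef
  have hindmeas : Measurable ind := measurable_const.indicator hEmeasS
  have hind0 : ∀ u, 0 ≤ ind u := fun u => Set.indicator_nonneg (fun _ _ => zero_le_one) u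
  have hind1 : ∀ u, ind u ≤ 1 := by
    intro u
    by_cases h : u ∈ Eset <;>
      simp [hinddef, Set.indicator_of_mem, Set.indicator_of_notMem, h]
  have hindanti : Antitone ind := by
    intro u u' huu
    by_cases h : u' ∈ Eset
    · rw [hinddef, Set.indicator_of_mem h, Set.indicator_of_mem (hElower u u' huu h)]
    · rw [hinddef, Set.indicator_of_notMem h]
      exact hind0 u
  have harris := queueAux_harris_pi Q.μ j f0 ind hf0meas hindmeas hf0mono hindanti
    hf0nonneg hf0le hind0 hind1
  have hintind : ∫ u, ind u ∂ν = (ν Eset).toReal := by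
    rw [hinddef, integral_indicator_const (1 : ℝ) hEmeasS]
    simp [measureReal_def]
  have hintf0 : ∫ u, f0 u ∂ν = qL.toReal := by
    rw [hqLdef]
    exact integral_toReal hgEmeas.aemeasurable
      (Filter.Eventually.of_forall fun u => lt_of_le_of_lt (hgEle u) ENNReal.one_lt_top)
  have hkey : ν (Eset ∩ Gsetᶜ) ≤ ν Eset / 2 := by
    by_cases hq0 : qL = 0
    · have hae : gE =ᵐ[ν] 0 := (lintegral_eq_zero_iff hgEmeas).mp (by rw [← hqLdef]; exact hq0)
      have hnull : ν {u | ¬ gE u = 0} = 0 := by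
        have h2 := ae_iff.mp hae
        simpa using h2
      have hsub : Eset ∩ Gsetᶜ ⊆ {u | ¬ gE u = 0} := by
        intro u hu hg0'
        refine hu.2 ?_
        show f0 u ≤ 2 * Q.symWalkProb j y
        have hf00 : f0 u = 0 := by rw [hf0def]; simp [hg0']
        rw [hf00]
        have : 0 ≤ Q.symWalkProb j y := by rw [hsym]; exact ENNReal.toReal_nonneg
        linarith
      have h0 : ν (Eset ∩ Gsetᶜ) = 0 := measure_mono_null hsub hnull
      rw [h0]
      exact zero_le
    · have hqpos : 0 < qL.toReal := ENNReal.toReal_pos hq0 hqLtop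
      have markov : ∀ u, Set.indicator (Eset ∩ Gsetᶜ) (fun _ => 2 * qL.toReal) u
          ≤ f0 u * ind u := by
        intro u
        by_cases hu : u ∈ Eset ∩ Gsetᶜ
        · rw [Set.indicator_of_mem hu]
          have h1 : ind u = 1 := by rw [hinddef]; exact Set.indicator_of_mem hu.1 _
          rw [h1, mul_one]
          have h2 : ¬ f0 u ≤ 2 * Q.symWalkProb j y := hu.2
          rw [hsym] at h2
          exact le_of_lt (not_le.mp h2)
        · rw [Set.indicator_of_notMem hu]
          exact mul_nonneg (hf0nonneg u) (hind0 u)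
      have hL : ∫ u, Set.indicator (Eset ∩ Gsetᶜ) (fun _ => 2 * qL.toReal) u ∂ν
          = (ν (Eset ∩ Gsetᶜ)).toReal * (2 * qL.toReal) := by
        rw [integral_indicator_const _ (hEmeasS.inter hGmeasS.compl)]
        simp [mul_comm, measureReal_def]
      have hmono : ∫ u, Set.indicator (Eset ∩ Gsetᶜ) (fun _ => 2 * qL.toReal) u ∂ν
          ≤ ∫ u, f0 u * ind u ∂ν := by
        refine integral_mono ((integrable_const _).indicator (hEmeasS.inter hGmeasS.compl))
          (queueAux_integrable01 ν (hf0meas.mul hindmeas)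
            (fun u => mul_nonneg (hf0nonneg u) (hind0 u))
            (fun u => mul_le_one₀ (hf0le u) (hind0 u) (hind1 u))) markov
      have hchain : (ν (Eset ∩ Gsetᶜ)).toReal * (2 * qL.toReal)
          ≤ qL.toReal * (ν Eset).toReal := by
        calc (ν (Eset ∩ Gsetᶜ)).toReal * (2 * qL.toReal)
            = ∫ u, Set.indicator (Eset ∩ Gsetᶜ) (fun _ => 2 * qL.toReal) u ∂ν := hL.symm
          _ ≤ ∫ u, f0 u * ind u ∂ν := hmono
          _ ≤ (∫ u, f0 u ∂ν) * ∫ u, ind u ∂ν := harris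
          _ = qL.toReal * (ν Eset).toReal := by rw [hintf0, hintind]
      have hreal : (ν (Eset ∩ Gsetᶜ)).toReal ≤ (ν Eset).toReal / 2 := by
        nlinarith [hchain, hqpos]
      have htop2 : ν Eset / 2 ≠ ⊤ :=
        ne_top_of_le_ne_top (measure_ne_top _ _) ENNReal.half_le_self
      rw [← ENNReal.toReal_le_toReal (measure_ne_top _ _) htop2, ENNReal.toReal_div]
      simpa using hreal
  -- conclusion
  rw [hEext] at hpos
  rw [hEext, hGext]
  have hPE : P (Φ ⁻¹' Eset) = ν Eset := hPfin _ hEmeasS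
  have hPE0 : P (Φ ⁻¹' Eset) ≠ 0 := hpos.ne'
  have hPEtop : P (Φ ⁻¹' Eset) ≠ ⊤ := measure_ne_top _ _
  have hν0 : ν Eset ≠ 0 := by rw [← hPE]; exact hPE0
  have hνtop : ν Eset ≠ ⊤ := measure_ne_top _ _
  rw [ProbabilityTheory.cond_apply (hΦ hEmeasS)]
  have hinter : P (Φ ⁻¹' Eset ∩ Φ ⁻¹' Gset) = ν (Eset ∩ Gset) := by
    rw [← Set.preimage_inter, hPfin _ (hEmeasS.inter hGmeasS)]
  have hsplit : ν (Eset ∩ Gset) + ν (Eset ∩ Gsetᶜ) = ν Eset := by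
    have h := measure_inter_add_diff (μ := ν) Eset hGmeasS
    rwa [Set.diff_eq] at h
  have hgood2 : ν Eset / 2 ≤ ν (Eset ∩ Gset) := by
    have heq : ν (Eset ∩ Gset) = ν Eset - ν (Eset ∩ Gsetᶜ) :=
      ENNReal.eq_sub_of_add_eq
        (ne_top_of_le_ne_top hνtop (measure_mono Set.inter_subset_left)) hsplit
    rw [heq]
    calc ν Eset / 2 = ν Eset - ν Eset / 2 := (ENNReal.sub_half hνtop).symm
      _ ≤ ν Eset - ν (Eset ∩ Gsetᶜ) := tsub_le_tsub_left hkey _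
  have hhalf : (2 : ENNReal)⁻¹ ≤ (P (Φ ⁻¹' Eset))⁻¹ * P (Φ ⁻¹' Eset ∩ Φ ⁻¹' Gset) := by
    rw [hinter, hPE]
    calc (2 : ENNReal)⁻¹ = (ν Eset)⁻¹ * (ν Eset / 2) := by
          rw [div_eq_mul_inv, ← mul_assoc, ENNReal.inv_mul_cancel hν0 hνtop, one_mul]
      _ ≤ (ν Eset)⁻¹ * ν (Eset ∩ Gset) := mul_le_mul_right hgood2 _
  have hle1 : (P (Φ ⁻¹' Eset))⁻¹ * P (Φ ⁻¹' Eset ∩ Φ ⁻¹' Gset) ≤ 1 := by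
    calc (P (Φ ⁻¹' Eset))⁻¹ * P (Φ ⁻¹' Eset ∩ Φ ⁻¹' Gset)
        ≤ (P (Φ ⁻¹' Eset))⁻¹ * P (Φ ⁻¹' Eset) :=
          mul_le_mul_right (measure_mono Set.inter_subset_left) _
      _ = 1 := ENNReal.inv_mul_cancel hPE0 hPEtop
  have hfin := ENNReal.toReal_mono (ne_top_of_le_ne_top (by simp) hle1) hhalf
  simpa [ENNReal.toReal_inv, one_div] using hfin
end
end

section
/- For the spatial queue process started from any initial configuration, for every even integer j ≥ 4, every integer s > j and every real y > 0: E[ N_C(j/2) ] ≤ 2 · E[ N_B(j/2) ]. (The expected number of long waves up to time j/2 is at most twice the expected number of good long waves.) -/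
open MeasureTheory ProbabilityTheory Filter
open scoped ENNReal

noncomputable section

namespace SQHarris

variable {α : Type*} [MeasurableSpace α]

lemma chebyshev_corr [LinearOrder α] (ν : Measure α) [IsProbabilityMeasure ν]
    {f g : α → ℝ≥0∞} (hf : Measurable f) (hg : Measurable g)
    (hfm : Monotone f) (hgm : Monotone g) :
    (∫⁻ x, f x ∂ν) * ∫⁻ x, g x ∂ν ≤ ∫⁻ x, f x * g x ∂ν := by
  have key : ∀ x y : α, f x * g y + f y * g x ≤ f x * g x + f y * g y := by
    intro x y
    have rearrange : ∀ a b c d : ℝ≥0∞, a ≤ b → c ≤ d → a * d + b * c ≤ a * c + b * d := by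
      intro a b c d hab hcd
      obtain ⟨e, rfl⟩ := exists_add_of_le hab
      obtain ⟨k, rfl⟩ := exists_add_of_le hcd
      calc a * (c + k) + (a + e) * c ≤ a * (c + k) + (a + e) * c + e * k := le_self_add
        _ = a * c + (a + e) * (c + k) := by ring
    rcases le_total x y with h | h
    · exact rearrange _ _ _ _ (hfm h) (hgm h)
    · rw [add_comm, add_comm (f x * g x)]
      exact rearrange _ _ _ _ (hfm h) (hgm h)
  have hint : ∫⁻ z : α × α, (f z.1 * g z.2 + f z.2 * g z.1) ∂(ν.prod ν)
      ≤ ∫⁻ z : α × α, (f z.1 * g z.1 + f z.2 * g z.2) ∂(ν.prod ν) :=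
    lintegral_mono fun z => key z.1 z.2
  rw [lintegral_add_left (μ := ν.prod ν)
      (show Measurable fun z : α × α => f z.1 * g z.2 by fun_prop),
    lintegral_add_left (μ := ν.prod ν)
      (show Measurable fun z : α × α => f z.1 * g z.1 by fun_prop)] at hint
  have e1 : ∫⁻ z : α × α, f z.1 * g z.2 ∂(ν.prod ν) = (∫⁻ x, f x ∂ν) * ∫⁻ x, g x ∂ν :=
    lintegral_prod_mul hf.aemeasurable hg.aemeasurable
  have e2 : ∫⁻ z : α × α, f z.2 * g z.1 ∂(ν.prod ν) = (∫⁻ x, f x ∂ν) * ∫⁻ x, g x ∂ν := by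
    have := lintegral_prod_mul (μ := ν) (ν := ν) hg.aemeasurable hf.aemeasurable
    simp only [mul_comm] at this ⊢
    exact this
  have e3 : ∫⁻ z : α × α, f z.1 * g z.1 ∂(ν.prod ν) = ∫⁻ x, f x * g x ∂ν := by
    have := lintegral_prod_mul (μ := ν) (ν := ν) (hf.mul hg).aemeasurable
      (aemeasurable_const (b := (1 : ℝ≥0∞)))
    simpa using this
  have e4 : ∫⁻ z : α × α, f z.2 * g z.2 ∂(ν.prod ν) = ∫⁻ x, f x * g x ∂ν := by
    have := lintegral_prod_mul (μ := ν) (ν := ν) (aemeasurable_const (b := (1 : ℝ≥0∞)))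
      (hf.mul hg).aemeasurable
    simpa using this
  rw [e1, e2, e3, e4] at hint
  by_contra hcon
  push_neg at hcon
  exact absurd hint (not_le.2 (ENNReal.add_lt_add hcon hcon))


lemma harris_fn (μ : Measure ℝ) [IsProbabilityMeasure μ] :
    ∀ (n : ℕ) (f g : (Fin n → ℝ) → ℝ≥0∞), Measurable f → Measurable g →
      Monotone f → Monotone g →
      (∫⁻ h, f h ∂(Measure.pi fun _ : Fin n => μ)) *
          ∫⁻ h, g h ∂(Measure.pi fun _ : Fin n => μ)
        ≤ ∫⁻ h, f h * g h ∂(Measure.pi fun _ : Fin n => μ) := by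
  intro n
  induction n with
  | zero =>
      intro f g hf hg hfm hgm
      haveI : IsProbabilityMeasure (Measure.pi fun _ : Fin 0 => μ) := inferInstance
      rw [lintegral_unique, lintegral_unique, lintegral_unique]
      simp
  | succ n ih =>
      intro f g hf hg hfm hgm
      set κn : Measure (Fin n → ℝ) := Measure.pi fun _ : Fin n => μ with hκn
      haveI : IsProbabilityMeasure κn := inferInstance
      set e := MeasurableEquiv.piFinSuccAbove (fun _ : Fin (n + 1) => ℝ) 0 with he
      have mp : MeasurePreserving e (Measure.pi fun _ : Fin (n + 1) => μ) (μ.prod κn) :=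
        measurePreserving_piFinSuccAbove (fun _ : Fin (n + 1) => μ) 0
      have hsymm : ∀ F : (Fin (n + 1) → ℝ) → ℝ≥0∞, Measurable F →
          ∫⁻ h, F h ∂(Measure.pi fun _ : Fin (n + 1) => μ)
            = ∫⁻ p : ℝ × (Fin n → ℝ), F (e.symm p) ∂(μ.prod κn) := by
        intro F hF
        rw [(MeasurePreserving.symm e mp).lintegral_comp hF]
      -- monotonicity of e.symm
      have hesymm_mono : Monotone fun p : ℝ × (Fin n → ℝ) => e.symm p := by
        intro p q hpq i
        have h1 : p.1 ≤ q.1 := hpq.1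
        have h2 : p.2 ≤ q.2 := hpq.2
        have hval : ∀ r : ℝ × (Fin n → ℝ),
            e.symm r = Fin.cons r.1 r.2 := by
          intro r
          simp [he, MeasurableEquiv.piFinSuccAbove, Fin.insertNthEquiv,
            Fin.insertNth_zero]
        show e.symm p i ≤ e.symm q i
        rw [hval p, hval q]
        induction i using Fin.cases with
        | zero => simpa using h1
        | succ i => simpa using h2 i
      have hf' : Measurable fun p : ℝ × (Fin n → ℝ) => f (e.symm p) :=
        hf.comp e.symm.measurable
      have hg' : Measurable fun p : ℝ × (Fin n → ℝ) => g (e.symm p) :=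
        hg.comp e.symm.measurable
      set F : ℝ → ℝ≥0∞ := fun x => ∫⁻ w, f (e.symm (x, w)) ∂κn with hF
      set G : ℝ → ℝ≥0∞ := fun x => ∫⁻ w, g (e.symm (x, w)) ∂κn with hG
      have hFmeas : Measurable F := Measurable.lintegral_prod_right hf'
      have hGmeas : Measurable G := Measurable.lintegral_prod_right hg'
      have hFmono : Monotone F := by
        intro x x' hx
        exact lintegral_mono fun w => hfm (hesymm_mono ⟨hx, le_rfl⟩)
      have hGmono : Monotone G := by
        intro x x' hx
        exact lintegral_mono fun w => hgm (hesymm_mono ⟨hx, le_rfl⟩)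
      calc (∫⁻ h, f h ∂(Measure.pi fun _ : Fin (n + 1) => μ)) *
            ∫⁻ h, g h ∂(Measure.pi fun _ : Fin (n + 1) => μ)
          = (∫⁻ x, F x ∂μ) * ∫⁻ x, G x ∂μ := by
            rw [hsymm f hf, hsymm g hg, lintegral_prod _ hf'.aemeasurable,
              lintegral_prod _ hg'.aemeasurable]
        _ ≤ ∫⁻ x, F x * G x ∂μ := chebyshev_corr μ hFmeas hGmeas hFmono hGmono
        _ ≤ ∫⁻ x, ∫⁻ w, f (e.symm (x, w)) * g (e.symm (x, w)) ∂κn ∂μ := by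
            refine lintegral_mono fun x => ?_
            exact ih (fun w => f (e.symm (x, w))) (fun w => g (e.symm (x, w)))
              (hf'.comp measurable_prodMk_left) (hg'.comp measurable_prodMk_left)
              (fun w w' hw => hfm (hesymm_mono ⟨le_rfl, hw⟩))
              (fun w w' hw => hgm (hesymm_mono ⟨le_rfl, hw⟩))
        _ = ∫⁻ h, f h * g h ∂(Measure.pi fun _ : Fin (n + 1) => μ) := by
            rw [hsymm (fun h => f h * g h) (hf.mul hg),
              lintegral_prod (fun p => f (e.symm p) * g (e.symm p)) (hf'.mul hg').aemeasurable]

lemma harris_set (μ : Measure ℝ) [IsProbabilityMeasure μ] {n : ℕ}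
    {U V : Set (Fin n → ℝ)} (hU : MeasurableSet U) (hV : MeasurableSet V)
    (hUu : IsUpperSet U) (hVu : IsUpperSet V) :
    (Measure.pi fun _ : Fin n => μ) U * (Measure.pi fun _ : Fin n => μ) V
      ≤ (Measure.pi fun _ : Fin n => μ) (U ∩ V) := by
  have hind : ∀ (S : Set (Fin n → ℝ)), IsUpperSet S →
      Monotone (S.indicator (1 : (Fin n → ℝ) → ℝ≥0∞)) := by
    intro S hS a b hab
    by_cases ha : a ∈ S
    · rw [Set.indicator_of_mem ha, Set.indicator_of_mem (hS hab ha)]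
      exact le_rfl
    · rw [Set.indicator_of_notMem ha]
      exact zero_le
  have := harris_fn μ n (U.indicator 1) (V.indicator 1)
    (measurable_const.indicator hU) (measurable_const.indicator hV) (hind U hUu) (hind V hVu)
  rw [lintegral_indicator_one hU, lintegral_indicator_one hV] at this
  refine this.trans (le_of_eq ?_)
  rw [← lintegral_indicator_one (hU.inter hV)]
  congr 1
  funext x
  rw [Set.inter_indicator_one, Pi.mul_apply]

lemma harris_lower_upper (μ : Measure ℝ) [IsProbabilityMeasure μ] {n : ℕ}
    {D U : Set (Fin n → ℝ)} (hD : MeasurableSet D) (hU : MeasurableSet U)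
    (hDl : IsLowerSet D) (hUu : IsUpperSet U) :
    (Measure.pi fun _ : Fin n => μ) (D ∩ U)
      ≤ (Measure.pi fun _ : Fin n => μ) D * (Measure.pi fun _ : Fin n => μ) U := by
  set κ : Measure (Fin n → ℝ) := Measure.pi fun _ : Fin n => μ with hκ
  haveI : IsProbabilityMeasure κ := inferInstance
  have h1 : κ Dᶜ * κ U ≤ κ (Dᶜ ∩ U) := harris_set μ hD.compl hU hDl.compl hUu
  have hsplit : κ (D ∩ U) + κ (Dᶜ ∩ U) = κ U := by
    have h := measure_inter_add_diff (μ := κ) U hD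
    rw [Set.diff_eq] at h
    rw [Set.inter_comm D U, Set.inter_comm Dᶜ U]
    exact h
  have hcompl : κ D + κ Dᶜ = 1 := by
    rw [measure_add_measure_compl hD, measure_univ]
  have key : κ (D ∩ U) + κ Dᶜ * κ U ≤ κ D * κ U + κ Dᶜ * κ U := by
    calc κ (D ∩ U) + κ Dᶜ * κ U ≤ κ (D ∩ U) + κ (Dᶜ ∩ U) := add_le_add_right h1 _
      _ = κ U := hsplit
      _ = (κ D + κ Dᶜ) * κ U := by rw [hcompl, one_mul]
      _ = κ D * κ U + κ Dᶜ * κ U := by ring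
  have hfin : κ Dᶜ * κ U ≠ ⊤ :=
    (mul_le_mul' (measure_mono (Set.subset_univ _)) (measure_mono (Set.subset_univ _))).trans_lt
      (by simp [measure_univ]) |>.ne
  exact (ENNReal.add_le_add_iff_right hfin).1 key

end SQHarris

-- AUX --

namespace SQGood

lemma sum_Icc_eq_sum_filter {j k : ℕ} (hk : k ≤ j) (x : ℕ → ℝ) :
    ∑ i ∈ Finset.Icc 1 k, x i
      = ∑ i ∈ Finset.univ.filter (fun i : Fin j => (i : ℕ) < k), x ((i : ℕ) + 1) := by
  rcases Nat.eq_zero_or_pos j with hj | hj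
  · subst hj
    have hk0 : k = 0 := by omega
    subst hk0
    simp
  refine Finset.sum_nbij' (i := fun i => if h : i - 1 < j then (⟨i - 1, h⟩ : Fin j) else
      ⟨0, hj⟩) (j := fun i => (i : ℕ) + 1) ?_ ?_ ?_ ?_ ?_
  · intro a ha
    simp only [Finset.mem_Icc] at ha
    have h1 : a - 1 < j := by omega
    simp only [h1, dif_pos, Finset.mem_filter, Finset.mem_univ, true_and]
    omega
  · intro a ha
    simp only [Finset.mem_filter, Finset.mem_univ, true_and] at ha
    simp only [Finset.mem_Icc]
    omega
  · intro a ha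
    simp only [Finset.mem_Icc] at ha
    have h1 : a - 1 < j := by omega
    simp only [h1, dif_pos]
    omega
  · intro a ha
    simp only [Finset.mem_filter, Finset.mem_univ, true_and] at ha
    have h1 : (a : ℕ) + 1 - 1 < j := by omega
    simp only [h1, dif_pos]
    apply Fin.ext
    simp
  · intro a ha
    simp only [Finset.mem_Icc] at ha
    have h1 : a - 1 < j := by omega
    simp only [h1, dif_pos]
    congr 1
    omega

variable (Q : QueueParams) (j : ℕ) (y : ℝ)

/-- The product measure `μ^⊗j`. -/
def kpi : Measure (Fin j → ℝ) :=
  haveI := Q.μ_prob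
  Measure.pi fun _ : Fin j => Q.μ

instance : IsProbabilityMeasure (kpi Q j) := by
  haveI := Q.μ_prob
  unfold kpi
  infer_instance

/-- `q_{j,y}` as an `ℝ≥0∞`-valued function of the `j` relevant offsets. -/
def Gfun : (Fin j → ℝ) → ℝ≥0∞ := fun h =>
  kpi Q j {v : Fin j → ℝ | ∀ k ∈ Finset.Icc 1 j,
    (∑ i ∈ Finset.univ.filter (fun i : Fin j => (i : ℕ) < k), v i)
      - (∑ i ∈ Finset.univ.filter (fun i : Fin j => (i : ℕ) < k), h i) ≤ y}

/-- `q(j,y)` as an `ℝ≥0∞` number. -/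
def qE : ℝ≥0∞ :=
  haveI := Q.μ_prob
  (Measure.pi fun _ : Fin j => Q.μ.prod Q.μ)
    {v : Fin j → ℝ × ℝ | ∀ k ∈ Finset.Icc 1 j,
      (∑ i ∈ Finset.univ.filter (fun i : Fin j => (i : ℕ) < k), ((v i).1 - (v i).2)) ≤ y}

lemma symWalkProb_eq : Q.symWalkProb j y = (qE Q j y).toReal := rfl

lemma condWalkProb_eq (x : ℕ → ℝ) :
    Q.condWalkProb j y x = (Gfun Q j y (fun i : Fin j => x ((i : ℕ) + 1))).toReal := by
  haveI := Q.μ_prob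
  unfold QueueParams.condWalkProb Gfun kpi
  congr 2
  ext v
  simp only [Set.mem_setOf_eq]
  refine forall₂_congr fun k hk => ?_
  rw [sum_Icc_eq_sum_filter (Finset.mem_Icc.1 hk).2 x]

/-- The product-measurable set underlying `Gfun`. -/
def Tset : Set ((Fin j → ℝ) × (Fin j → ℝ)) :=
  {p | ∀ k ∈ Finset.Icc 1 j,
    (∑ i ∈ Finset.univ.filter (fun i : Fin j => (i : ℕ) < k), p.2 i)
      - (∑ i ∈ Finset.univ.filter (fun i : Fin j => (i : ℕ) < k), p.1 i) ≤ y}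

lemma Tset_measurable : MeasurableSet (Tset j y) := by
  have : Tset j y = ⋂ k ∈ Finset.Icc 1 j,
      {p : (Fin j → ℝ) × (Fin j → ℝ) |
        (∑ i ∈ Finset.univ.filter (fun i : Fin j => (i : ℕ) < k), p.2 i)
          - (∑ i ∈ Finset.univ.filter (fun i : Fin j => (i : ℕ) < k), p.1 i) ≤ y} := by
    ext p
    simp [Tset]
  rw [this]
  refine MeasurableSet.biInter (Finset.Icc 1 j : Finset ℕ).countable_toSet fun k _ => ?_
  exact measurableSet_le (by fun_prop) measurable_const

lemma Gfun_eq_section (h : Fin j → ℝ) :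
    Gfun Q j y h = kpi Q j (Prod.mk h ⁻¹' Tset j y) := rfl

lemma Gfun_measurable : Measurable (Gfun Q j y) := by
  haveI := Q.μ_prob
  exact measurable_measure_prodMk_left (Tset_measurable j y)

lemma Gfun_monotone : Monotone (Gfun Q j y) := by
  intro h h' hh
  refine measure_mono fun v hv => ?_
  intro k hk
  have := hv k hk
  have hsum : (∑ i ∈ Finset.univ.filter (fun i : Fin j => (i : ℕ) < k), h i)
      ≤ ∑ i ∈ Finset.univ.filter (fun i : Fin j => (i : ℕ) < k), h' i :=
    Finset.sum_le_sum fun i _ => hh i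
  linarith

lemma kpi_def : kpi Q j = Measure.pi fun _ : Fin j => Q.μ := rfl

/-- The set from the definition of `q(j,y)`. -/
def SymSet : Set (Fin j → ℝ × ℝ) :=
  {v | ∀ k ∈ Finset.Icc 1 j,
    (∑ i ∈ Finset.univ.filter (fun i : Fin j => (i : ℕ) < k), ((v i).1 - (v i).2)) ≤ y}

lemma qE_def : qE Q j y =
    (haveI := Q.μ_prob; (Measure.pi fun _ : Fin j => Q.μ.prod Q.μ) (SymSet j y)) := rfl

lemma SymSet_measurable : MeasurableSet (SymSet j y) := by
  have : SymSet j y = ⋂ k ∈ Finset.Icc 1 j,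
      {v : Fin j → ℝ × ℝ |
        (∑ i ∈ Finset.univ.filter (fun i : Fin j => (i : ℕ) < k), ((v i).1 - (v i).2)) ≤ y} := by
    ext v
    simp [SymSet]
  rw [this]
  refine MeasurableSet.biInter (Finset.Icc 1 j : Finset ℕ).countable_toSet fun k _ => ?_
  refine measurableSet_le (Finset.measurable_sum _ fun i _ => ?_) measurable_const
  exact ((measurable_fst.comp (measurable_pi_apply i)).sub
    (measurable_snd.comp (measurable_pi_apply i)))

lemma pi_prod_eq_map :
    haveI := Q.μ_prob
    (Measure.pi fun _ : Fin j => Q.μ.prod Q.μ)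
      = Measure.map (MeasurableEquiv.arrowProdEquivProdArrow ℝ ℝ (Fin j)).symm
          ((kpi Q j).prod (kpi Q j)) := by
  haveI := Q.μ_prob
  set e := (MeasurableEquiv.arrowProdEquivProdArrow ℝ ℝ (Fin j)).symm with he
  have hsymm_apply : ∀ p : (Fin j → ℝ) × (Fin j → ℝ), e p = fun i => (p.1 i, p.2 i) :=
    fun p => rfl
  refine Measure.pi_eq_generateFrom
    (C := fun _ => Set.image2 (· ×ˢ ·) {s : Set ℝ | MeasurableSet s} {t : Set ℝ | MeasurableSet t})
    (fun _ => generateFrom_prod) (fun _ => isPiSystem_prod) (fun _ => ?_) ?_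
  · exact ⟨fun _ => Set.univ ×ˢ Set.univ,
      fun _ => Set.mem_image2_of_mem (by simp : Set.univ ∈ {s : Set ℝ | MeasurableSet s})
        (by simp : Set.univ ∈ {t : Set ℝ | MeasurableSet t}),
      fun _ => by rw [Set.univ_prod_univ]; simp,
      by rw [Set.univ_prod_univ]; exact Set.iUnion_const Set.univ⟩
  · intro s hs
    have hrect : ∀ i : Fin j, ∃ t u : Set ℝ, MeasurableSet t ∧ MeasurableSet u
        ∧ t ×ˢ u = s i := by
      intro i
      rcases hs i with ⟨t, ht, u, hu, hst⟩
      exact ⟨t, u, ht, hu, hst⟩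
    choose t u ht hu hstu using hrect
    have hsmeas : ∀ i, MeasurableSet (s i) := fun i => by
      rw [← hstu i]; exact (ht i).prod (hu i)
    have hpre : e ⁻¹' Set.pi Set.univ s = (Set.pi Set.univ t) ×ˢ (Set.pi Set.univ u) := by
      ext p
      simp only [Set.mem_preimage, hsymm_apply, Set.mem_pi, Set.mem_univ, forall_true_left,
        Set.mem_prod]
      constructor
      · intro hp
        constructor
        · intro i
          have := hp i
          rw [← hstu i] at this
          exact this.1
        · intro i
          have := hp i
          rw [← hstu i] at this
          exact this.2
      · intro hp i
        rw [← hstu i]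
        exact ⟨hp.1 i, hp.2 i⟩
    rw [Measure.map_apply (MeasurableEquiv.measurable _) (MeasurableSet.univ_pi hsmeas), hpre,
      Measure.prod_prod, kpi_def, Measure.pi_pi, Measure.pi_pi, ← Finset.prod_mul_distrib]
    refine (Finset.prod_congr rfl fun i _ => ?_).symm
    rw [← hstu i, Measure.prod_prod]

lemma lintegral_Gfun : ∫⁻ h, Gfun Q j y h ∂(kpi Q j) = qE Q j y := by
  haveI := Q.μ_prob
  set e := (MeasurableEquiv.arrowProdEquivProdArrow ℝ ℝ (Fin j)).symm with he
  have hsymm_apply : ∀ p : (Fin j → ℝ) × (Fin j → ℝ), e p = fun i => (p.1 i, p.2 i) :=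
    fun p => rfl
  rw [qE_def, pi_prod_eq_map,
    Measure.map_apply (MeasurableEquiv.measurable _) (SymSet_measurable j y)]
  have hpre : e ⁻¹' SymSet j y
      = {p : (Fin j → ℝ) × (Fin j → ℝ) | ∀ k ∈ Finset.Icc 1 j,
          (∑ i ∈ Finset.univ.filter (fun i : Fin j => (i : ℕ) < k), p.1 i)
            - (∑ i ∈ Finset.univ.filter (fun i : Fin j => (i : ℕ) < k), p.2 i) ≤ y} := by
    ext p
    simp only [Set.mem_preimage, hsymm_apply, SymSet, Set.mem_setOf_eq]
    refine forall₂_congr fun k hk => ?_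
    rw [Finset.sum_sub_distrib]
  rw [hpre, Measure.prod_apply_symm]
  · refine lintegral_congr fun b => ?_
    rfl
  · have : {p : (Fin j → ℝ) × (Fin j → ℝ) | ∀ k ∈ Finset.Icc 1 j,
        (∑ i ∈ Finset.univ.filter (fun i : Fin j => (i : ℕ) < k), p.1 i)
          - (∑ i ∈ Finset.univ.filter (fun i : Fin j => (i : ℕ) < k), p.2 i) ≤ y}
        = Prod.swap ⁻¹' Tset j y := by
      ext p
      simp [Tset, Set.mem_preimage]
    rw [this]
    exact (Tset_measurable j y).preimage measurable_swap

lemma qE_ne_top : qE Q j y ≠ ⊤ := by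
  haveI := Q.μ_prob
  rw [qE_def]
  exact (measure_lt_top _ _).ne

lemma qE_ne_zero (hy : 0 < y) : qE Q j y ≠ 0 := by
  haveI := Q.μ_prob
  have hA : ((2 : ℝ≥0∞)⁻¹) ≤ (Q.μ.prod Q.μ) {p : ℝ × ℝ | p.1 ≤ p.2} := by
    have hswap : (Q.μ.prod Q.μ) {p : ℝ × ℝ | p.2 < p.1}
        = (Q.μ.prod Q.μ) {p : ℝ × ℝ | p.1 < p.2} := by
      conv_lhs => rw [← Measure.prod_swap]
      rw [Measure.map_apply measurable_swap (measurableSet_lt measurable_snd measurable_fst)]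
      congr 1
    have hcompl : (Q.μ.prod Q.μ) {p : ℝ × ℝ | p.1 ≤ p.2}
        + (Q.μ.prod Q.μ) {p : ℝ × ℝ | p.2 < p.1} = 1 := by
      have : {p : ℝ × ℝ | p.2 < p.1} = {p : ℝ × ℝ | p.1 ≤ p.2}ᶜ := by
        ext p
        simp [not_le]
      rw [this, measure_add_measure_compl (measurableSet_le measurable_fst measurable_snd),
        measure_univ]
    have hsub : (Q.μ.prod Q.μ) {p : ℝ × ℝ | p.1 < p.2} ≤ (Q.μ.prod Q.μ) {p : ℝ × ℝ | p.1 ≤ p.2} :=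
      measure_mono fun p hp => by
        have hlt : p.1 < p.2 := hp
        exact hlt.le
    have h1 : 1 ≤ 2 * (Q.μ.prod Q.μ) {p : ℝ × ℝ | p.1 ≤ p.2} := by
      rw [two_mul]
      calc (1 : ℝ≥0∞) = _ + _ := hcompl.symm
        _ ≤ _ + _ := add_le_add_right (hswap.le.trans hsub) _
    calc (2 : ℝ≥0∞)⁻¹ = 2⁻¹ * 1 := (mul_one _).symm
      _ ≤ 2⁻¹ * (2 * (Q.μ.prod Q.μ) {p : ℝ × ℝ | p.1 ≤ p.2}) := mul_le_mul_right h1 _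
      _ = (Q.μ.prod Q.μ) {p : ℝ × ℝ | p.1 ≤ p.2} := by
          rw [← mul_assoc, ENNReal.inv_mul_cancel two_ne_zero ENNReal.ofNat_ne_top, one_mul]
  have hsub2 : Set.pi Set.univ (fun _ : Fin j => {p : ℝ × ℝ | p.1 ≤ p.2}) ⊆ SymSet j y := by
    intro v hv k hk
    refine le_trans (Finset.sum_nonpos fun i _ => ?_) hy.le
    have := hv i (Set.mem_univ i)
    simpa [sub_nonpos] using this
  have hge : ((2 : ℝ≥0∞)⁻¹) ^ j ≤ qE Q j y := by
    rw [qE_def]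
    refine le_trans ?_ (measure_mono hsub2)
    rw [Measure.pi_pi]
    rw [Finset.prod_const, Finset.card_univ, Fintype.card_fin]
    exact pow_le_pow_left' hA j
  intro h0
  rw [h0] at hge
  simp at hge

/-- The good set in terms of the last `j` offsets. -/
def GoodSet : Set (Fin j → ℝ) :=
  {h | (Gfun Q j y h).toReal ≤ 2 * Q.symWalkProb j y}

lemma GoodSet_measurable : MeasurableSet (GoodSet Q j y) :=
  measurableSet_le (Gfun_measurable Q j y).ennreal_toReal measurable_const

lemma GoodSet_lower : IsLowerSet (GoodSet Q j y) := by
  intro h h' hh hg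
  refine le_trans (ENNReal.toReal_mono ?_ (Gfun_monotone Q j y hh)) hg
  exact (measure_lt_top _ _).ne

lemma meas_nongood_le_half (hy : 0 < y) :
    kpi Q j (GoodSet Q j y)ᶜ ≤ 2⁻¹ := by
  haveI := Q.μ_prob
  have hsub : (GoodSet Q j y)ᶜ ⊆ {h : Fin j → ℝ | 2 * qE Q j y ≤ Gfun Q j y h} := by
    intro h hh
    simp only [GoodSet, Set.mem_compl_iff, Set.mem_setOf_eq, not_le] at hh
    have h2q : (2 * qE Q j y).toReal = 2 * Q.symWalkProb j y := by
      rw [ENNReal.toReal_mul, symWalkProb_eq]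
      norm_num
    have h2qt : 2 * qE Q j y ≠ ⊤ := ENNReal.mul_ne_top (by norm_num) (qE_ne_top Q j y)
    have hGt : Gfun Q j y h ≠ ⊤ := (measure_lt_top _ _).ne
    have hlt : 2 * qE Q j y < Gfun Q j y h :=
      (ENNReal.toReal_lt_toReal h2qt hGt).1 (by rw [h2q]; exact hh)
    exact hlt.le
  refine le_trans (measure_mono hsub) ?_
  by_contra hcon
  push_neg at hcon
  have hmarkov := mul_meas_ge_le_lintegral₀ (μ := kpi Q j)
    (Gfun_measurable Q j y).aemeasurable (2 * qE Q j y)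
  rw [lintegral_Gfun] at hmarkov
  have h2q0 : 2 * qE Q j y ≠ 0 := by
    simp [qE_ne_zero Q j y hy]
  have h2qt : 2 * qE Q j y ≠ ⊤ := ENNReal.mul_ne_top (by norm_num) (qE_ne_top Q j y)
  have hlt : 2 * qE Q j y * 2⁻¹ < 2 * qE Q j y
      * kpi Q j {h : Fin j → ℝ | 2 * qE Q j y ≤ Gfun Q j y h} :=
    ENNReal.mul_lt_mul_right h2q0 h2qt hcon
  have heq : 2 * qE Q j y * 2⁻¹ = qE Q j y := by
    rw [mul_comm 2 (qE Q j y), mul_assoc, ENNReal.mul_inv_cancel two_ne_zero ENNReal.ofNat_ne_top,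
      mul_one]
  rw [heq] at hlt
  exact absurd (hlt.trans_le hmarkov) (lt_irrefl _)

lemma meas_lower_le_two_mul (hy : 0 < y) {D : Set (Fin j → ℝ)} (hD : MeasurableSet D)
    (hDl : IsLowerSet D) :
    kpi Q j D ≤ 2 * kpi Q j (D ∩ GoodSet Q j y) := by
  haveI := Q.μ_prob
  have hG := GoodSet_measurable Q j y
  have hharris : kpi Q j (D ∩ (GoodSet Q j y)ᶜ) ≤ kpi Q j D * kpi Q j (GoodSet Q j y)ᶜ := by
    rw [kpi_def]
    exact SQHarris.harris_lower_upper Q.μ hD hG.compl hDl (GoodSet_lower Q j y).compl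
  have hup : kpi Q j (D ∩ (GoodSet Q j y)ᶜ) ≤ kpi Q j D * 2⁻¹ :=
    hharris.trans (mul_le_mul_right (meas_nongood_le_half Q j y hy) _)
  have hsplit : kpi Q j (D ∩ GoodSet Q j y) + kpi Q j (D ∩ (GoodSet Q j y)ᶜ) = kpi Q j D := by
    have h := measure_inter_add_diff (μ := kpi Q j) D hG
    rw [Set.diff_eq] at h
    exact h
  have hmain : kpi Q j D ≤ kpi Q j (D ∩ GoodSet Q j y) + kpi Q j D * 2⁻¹ :=
    calc kpi Q j D = kpi Q j (D ∩ GoodSet Q j y) + kpi Q j (D ∩ (GoodSet Q j y)ᶜ) := hsplit.symm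
      _ ≤ kpi Q j (D ∩ GoodSet Q j y) + kpi Q j D * 2⁻¹ := add_le_add_right hup _
  have hfin : kpi Q j D * 2⁻¹ ≠ ⊤ :=
    ENNReal.mul_ne_top (measure_lt_top _ _).ne (by norm_num)
  have hhalf : kpi Q j D * 2⁻¹ + kpi Q j D * 2⁻¹ = kpi Q j D := by
    rw [← mul_add, ENNReal.inv_two_add_inv_two, mul_one]
  have h2 : kpi Q j D * 2⁻¹ ≤ kpi Q j (D ∩ GoodSet Q j y) := by
    have h3 : kpi Q j D * 2⁻¹ + kpi Q j D * 2⁻¹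
        ≤ kpi Q j (D ∩ GoodSet Q j y) + kpi Q j D * 2⁻¹ := by
      rw [hhalf]
      exact hmain
    exact (ENNReal.add_le_add_iff_right hfin).1 h3
  calc kpi Q j D = 2 * (kpi Q j D * 2⁻¹) := by
        rw [← mul_assoc, mul_comm (2 : ℝ≥0∞), mul_assoc,
          ENNReal.mul_inv_cancel two_ne_zero ENNReal.ofNat_ne_top, mul_one]
    _ ≤ 2 * kpi Q j (D ∩ GoodSet Q j y) := mul_le_mul_right h2 _

end SQGood


namespace SQProc

open MeasurableSpace

variable {Q : QueueParams} {Ω : Type} [MeasurableSpace Ω]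

/-- The family of σ-algebras generated by the individual driving variables. -/
def mfam (qp : QueueProcess Q Ω) (p : ℕ × ℕ) : MeasurableSpace Ω :=
  MeasurableSpace.comap (qp.ξ (p.1 + 1) (p.2 + 1)) (inferInstance : MeasurableSpace ℝ)

/-- σ-algebra of the driving noise up to time `t`. -/
def past (qp : QueueProcess Q Ω) (t : ℕ) : MeasurableSpace Ω :=
  ⨆ p ∈ {p : ℕ × ℕ | p.2 + 1 ≤ t}, mfam qp p

lemma measurable_xi_mfam (qp : QueueProcess Q Ω) (p : ℕ × ℕ) :
    Measurable[mfam qp p] (qp.ξ (p.1 + 1) (p.2 + 1)) :=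
  Measurable.of_comap_le le_rfl

lemma measurable_xi_past (qp : QueueProcess Q Ω) {m u t : ℕ} (hm : 1 ≤ m) (hu : 1 ≤ u)
    (hut : u ≤ t) : Measurable[past qp t] (qp.ξ m u) := by
  have h1 : m - 1 + 1 = m := by omega
  have h2 : u - 1 + 1 = u := by omega
  have hmem : (m - 1, u - 1) ∈ {p : ℕ × ℕ | p.2 + 1 ≤ t} := by
    simp only [Set.mem_setOf_eq]
    omega
  have hle : mfam qp (m - 1, u - 1) ≤ past qp t := le_biSup _ hmem
  have : Measurable[mfam qp (m - 1, u - 1)] (qp.ξ m u) := by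
    have := measurable_xi_mfam qp (m - 1, u - 1)
    simpa [h1, h2] using this
  exact this.mono hle le_rfl

lemma past_mono (qp : QueueProcess Q Ω) {t t' : ℕ} (h : t ≤ t') : past qp t ≤ past qp t' := by
  refine iSup_le fun p => iSup_le fun hp => ?_
  exact le_biSup _ (by simp only [Set.mem_setOf_eq] at hp ⊢; omega)

lemma X_eq_ite (qp : QueueProcess Q Ω) (t i : ℕ) (ht : 1 ≤ t) (hi : 1 ≤ i) (ω : Ω) :
    qp.X i t ω = if (∀ k ∈ Finset.Icc 1 i,
        (∑ m ∈ Finset.Icc 1 k, qp.ξ m t ω) < qp.X (k + 1) (t - 1) ω - Q.cp) then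
      ∑ m ∈ Finset.Icc 1 i, qp.ξ m t ω else qp.X (i + 1) (t - 1) ω := by
  classical
  by_cases h : ∀ k ∈ Finset.Icc 1 i,
      (∑ m ∈ Finset.Icc 1 k, qp.ξ m t ω) < qp.X (k + 1) (t - 1) ω - Q.cp
  · rw [if_pos h]
    exact qp.X_move t ω i ht hi h
  · rw [if_neg h]
    exact qp.X_stay t ω i ht hi h

lemma X_measurable_past (qp : QueueProcess Q Ω) : ∀ t i, Measurable[past qp t] (qp.X i t) := by
  intro t
  induction t with
  | zero =>
      intro i
      have : qp.X i 0 = fun _ => qp.x0 i := funext fun ω => qp.X_init i ω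
      rw [this]
      exact measurable_const
  | succ t ih =>
      intro i
      rcases Nat.eq_zero_or_pos i with hi | hi
      · subst hi
        have : qp.X 0 (t + 1) = fun _ => (0 : ℝ) := funext fun ω => qp.X_zero (t + 1) ω
        rw [this]
        exact measurable_const
      have hXeq : qp.X i (t + 1) = fun ω => if (∀ k ∈ Finset.Icc 1 i,
          (∑ m ∈ Finset.Icc 1 k, qp.ξ m (t + 1) ω) < qp.X (k + 1) t ω - Q.cp) then
            ∑ m ∈ Finset.Icc 1 i, qp.ξ m (t + 1) ω else qp.X (i + 1) t ω := by
        funext ω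
        have := X_eq_ite qp (t + 1) i (Nat.le_add_left 1 t) hi ω
        simpa using this
      rw [hXeq]
      have hsum : ∀ k : ℕ, Measurable[past qp (t + 1)]
          fun ω => ∑ m ∈ Finset.Icc 1 k, qp.ξ m (t + 1) ω := by
        intro k
        refine Finset.measurable_sum _ fun m hm => ?_
        exact measurable_xi_past qp (Finset.mem_Icc.1 hm).1 (Nat.le_add_left 1 t) le_rfl
      have hXpast : ∀ k : ℕ, Measurable[past qp (t + 1)] (qp.X k t) := fun k =>
        (ih k).mono (past_mono qp (Nat.le_succ t)) le_rfl
      have hcond : MeasurableSet[past qp (t + 1)] {ω | ∀ k ∈ Finset.Icc 1 i,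
          (∑ m ∈ Finset.Icc 1 k, qp.ξ m (t + 1) ω) < qp.X (k + 1) t ω - Q.cp} := by
        have : {ω | ∀ k ∈ Finset.Icc 1 i,
            (∑ m ∈ Finset.Icc 1 k, qp.ξ m (t + 1) ω) < qp.X (k + 1) t ω - Q.cp}
          = ⋂ k ∈ Finset.Icc 1 i, {ω | (∑ m ∈ Finset.Icc 1 k, qp.ξ m (t + 1) ω)
              < qp.X (k + 1) t ω - Q.cp} := by
          ext ω
          simp
        rw [this]
        refine MeasurableSet.biInter (Finset.Icc 1 i : Finset ℕ).countable_toSet fun k _ => ?_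
        exact measurableSet_lt (hsum k) ((hXpast (k + 1)).sub measurable_const)
      exact Measurable.ite hcond (hsum i) (hXpast (i + 1))

lemma mem_waveC_iff (qp : QueueProcess Q Ω) (s j t : ℕ) (ω : Ω) :
    ω ∈ qp.waveC s j t ↔ ∀ k ∈ Finset.Icc 1 (s - t + j),
      (∑ m ∈ Finset.Icc 1 k, qp.ξ m t ω) < qp.X (k + 1) (t - 1) ω - Q.cp := by
  constructor
  · intro hω k hk
    rw [Finset.mem_Icc] at hk
    by_contra hcon
    push_neg at hcon
    have hmem : k ∈ {m : ℕ | 1 ≤ m ∧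
        qp.X (m + 1) (t - 1) ω - Q.cp ≤ ∑ r ∈ Finset.Icc 1 m, qp.ξ r t ω} := ⟨hk.1, hcon⟩
    have hinf : qp.W t ω ≤ (k : ℕ∞) := biInf_le _ hmem
    have hlt : ((s - t + j : ℕ) : ℕ∞) < (k : ℕ∞) := lt_of_lt_of_le hω hinf
    rw [Nat.cast_lt] at hlt
    omega
  · intro h
    show ((s - t + j : ℕ) : ℕ∞) < qp.W t ω
    have hge : ((s - t + j + 1 : ℕ) : ℕ∞) ≤ qp.W t ω := by
      refine le_iInf₂ fun m hm => ?_
      rcases hm with ⟨hm1, hm2⟩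
      rw [Nat.cast_le]
      by_contra hcon
      push_neg at hcon
      have hmm := h m (Finset.mem_Icc.2 ⟨hm1, by omega⟩)
      linarith
    refine lt_of_lt_of_le ?_ hge
    rw [Nat.cast_lt]
    omega

lemma sum_shift (f : ℕ → ℝ) {n k : ℕ} (h1 : n ≤ k) :
    ∑ m ∈ Finset.Icc (n + 1) k, f m = ∑ i ∈ Finset.Icc 1 (k - n), f (n + i) := by
  have hmap : Finset.Icc (n + 1) k = Finset.map (addLeftEmbedding n) (Finset.Icc 1 (k - n)) := by
    rw [Finset.map_add_left_Icc]
    congr 1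
    omega
  rw [hmap, Finset.sum_map]
  rfl

lemma sum_split (f : ℕ → ℝ) {n k j : ℕ} (h1 : n ≤ k) (h2 : k ≤ n + j) :
    ∑ m ∈ Finset.Icc 1 k, f m = (∑ m ∈ Finset.Icc 1 n, f m)
      + ∑ i ∈ Finset.univ.filter (fun i : Fin j => (i : ℕ) < k - n), f (n + 1 + (i : ℕ)) := by
  have hIoc : (∑ m ∈ Finset.Ioc 0 n, f m) + ∑ m ∈ Finset.Ioc n k, f m
      = ∑ m ∈ Finset.Ioc 0 k, f m :=
    Finset.sum_Ioc_consecutive f (Nat.zero_le n) h1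
  have e1 : Finset.Icc 1 k = Finset.Ioc 0 k := by
    rw [← Finset.Icc_add_one_left_eq_Ioc, zero_add]
  have e2 : Finset.Icc 1 n = Finset.Ioc 0 n := by
    rw [← Finset.Icc_add_one_left_eq_Ioc, zero_add]
  have e3 : Finset.Ioc n k = Finset.Icc (n + 1) k := by
    rw [Finset.Icc_add_one_left_eq_Ioc]
  rw [e1, e2, ← hIoc]
  congr 1
  rw [e3, sum_shift f h1, SQGood.sum_Icc_eq_sum_filter (by omega : k - n ≤ j)]
  refine Finset.sum_congr rfl fun i _ => ?_
  congr 1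
  omega

lemma measurable_pair' {α β γ : Type*} {m : MeasurableSpace α} [MeasurableSpace β]
    [MeasurableSpace γ] {f : α → β} {g : α → γ} (hf : Measurable[m] f)
    (hg : Measurable[m] g) : Measurable[m] fun ω => (f ω, g ω) :=
  Measurable.prodMk hf hg

lemma measurable_pi' {α δ : Type*} {m : MeasurableSpace α} [Countable δ] {f : α → δ → ℝ}
    (hf : ∀ k, Measurable[m] fun ω => f ω k) : Measurable[m] f :=
  measurable_pi_lambda f hf

lemma measurable_sum' {α : Type*} {m : MeasurableSpace α} {s : Finset ℕ} {f : ℕ → α → ℝ}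
    (hf : ∀ r ∈ s, Measurable[m] (f r)) : Measurable[m] fun ω => ∑ r ∈ s, f r ω :=
  Finset.measurable_sum s hf

lemma measurable_const' {α β : Type*} {m : MeasurableSpace α} [MeasurableSpace β] {c : β} :
    Measurable[m] fun _ => c :=
  measurable_const

theorem waveC_le_twice_waveB (qp : QueueProcess Q Ω) (j s t : ℕ) (ht1 : 1 ≤ t)
    (y : ℝ) (hy : 0 < y) :
    qp.P (qp.waveC s j t) ≤ 2 * qp.P (qp.waveB s j y t) := by
  classical
  haveI := Q.μ_prob
  haveI := qp.P_prob
  set n := s - t with hn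
  set η : Ω → (Fin j → ℝ) := fun ω i => qp.ξ (n + 1 + (i : ℕ)) t ω with hη
  set V : Ω → (ℕ → ℝ) × (ℕ → ℝ) := fun ω =>
    (fun k => qp.X k (t - 1) ω,
     fun m => if m ≤ n then ∑ r ∈ Finset.Icc 1 m, qp.ξ r t ω else 0) with hV
  have hηamb : Measurable η := by
    refine measurable_pi_lambda _ fun i => ?_
    exact qp.ξ_meas _ _ (by omega) ht1
  have hVamb : Measurable V := by
    refine Measurable.prod ?_ ?_
    · exact measurable_pi_lambda _ fun k => qp.X_meas k (t - 1)
    · refine measurable_pi_lambda _ fun m => ?_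
      by_cases hm : m ≤ n
      · simp only [hV, hm, if_true]
        exact Finset.measurable_sum _ fun r hr => qp.ξ_meas r t (Finset.mem_Icc.1 hr).1 ht1
      · simp only [hV, hm, if_false]
        exact measurable_const
  set S : Set (ℕ × ℕ) := {p | p.2 + 1 ≤ t - 1 ∨ (p.2 + 1 = t ∧ p.1 + 1 ≤ n)} with hSdef
  set T : Set (ℕ × ℕ) := {p | p.2 + 1 = t ∧ n + 1 ≤ p.1 + 1 ∧ p.1 + 1 ≤ n + j} with hTdef
  have hST : Disjoint S T := by
    rw [Set.disjoint_left]
    rintro ⟨a, b⟩ hpS hpT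
    simp only [hSdef, hTdef, Set.mem_setOf_eq] at hpS hpT
    omega
  have hIndep : Indep (⨆ p ∈ S, mfam qp p) (⨆ p ∈ T, mfam qp p) qp.P := by
    refine indep_iSup_of_disjoint (fun p => ?_) qp.ξ_indep.iIndep hST
    exact (qp.ξ_meas (p.1 + 1) (p.2 + 1) (by omega) (by omega)).comap_le
  have hmeasV_S : Measurable[⨆ p ∈ S, mfam qp p] V := by
    have hpastle : past qp (t - 1) ≤ ⨆ p ∈ S, mfam qp p := by
      refine iSup_le fun p => iSup_le fun hp => ?_
      exact le_biSup _ (Or.inl hp)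
    have hxiS : ∀ r, 1 ≤ r → r ≤ n → Measurable[⨆ p ∈ S, mfam qp p] (qp.ξ r t) := by
      intro r hr1 hrn
      have hmem : (r - 1, t - 1) ∈ S := by
        simp only [hSdef, Set.mem_setOf_eq]
        omega
      have hm := measurable_xi_mfam qp (r - 1, t - 1)
      have h1 : r - 1 + 1 = r := by omega
      have h2 : t - 1 + 1 = t := by omega
      rw [h1, h2] at hm
      exact hm.mono (le_biSup _ hmem) le_rfl
    have hcomp1 : Measurable[⨆ p ∈ S, mfam qp p] fun ω (k : ℕ) => qp.X k (t - 1) ω :=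
      measurable_pi' fun k => (X_measurable_past qp (t - 1) k).mono hpastle le_rfl
    have hcomp2 : Measurable[⨆ p ∈ S, mfam qp p]
        fun ω (m : ℕ) => if m ≤ n then ∑ r ∈ Finset.Icc 1 m, qp.ξ r t ω else 0 := by
      refine measurable_pi' fun m => ?_
      by_cases hm : m ≤ n
      · simp only [hm, if_true]
        refine measurable_sum' fun r hr => ?_
        have hr' := Finset.mem_Icc.1 hr
        exact hxiS r hr'.1 (le_trans hr'.2 hm)
      · simp only [hm, if_false]
        exact measurable_const'
    rw [hV]
    exact measurable_pair' hcomp1 hcomp2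
  have hmeasη_T : Measurable[⨆ p ∈ T, mfam qp p] η := by
    refine measurable_pi' fun i => ?_
    have hilt := i.isLt
    have hmem : (n + (i : ℕ), t - 1) ∈ T := by
      simp only [hTdef, Set.mem_setOf_eq]
      omega
    have hm := measurable_xi_mfam qp (n + (i : ℕ), t - 1)
    have h2 : t - 1 + 1 = t := by omega
    have h1 : n + (i : ℕ) + 1 = n + 1 + (i : ℕ) := by omega
    rw [h1, h2] at hm
    exact hm.mono (le_biSup _ hmem) le_rfl
  have hIndepFun : IndepFun V η qp.P := by
    have h1 := indep_of_indep_of_le_left hIndep hmeasV_S.comap_le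
    exact indep_of_indep_of_le_right h1 hmeasη_T.comap_le
  have hmap : qp.P.map (fun ω => (V ω, η ω)) = (qp.P.map V).prod (qp.P.map η) :=
    (indepFun_iff_map_prod_eq_prod_map_map hVamb.aemeasurable hηamb.aemeasurable).1 hIndepFun
  -- the law of η
  have hηlaw : qp.P.map η = SQGood.kpi Q j := by
    rw [SQGood.kpi_def]
    refine (Measure.pi_eq fun A hA => ?_).symm
    rw [Measure.map_apply hηamb (MeasurableSet.univ_pi hA)]
    have hpre : η ⁻¹' Set.pi Set.univ A
        = ⋂ i : Fin j, qp.ξ (n + 1 + (i : ℕ)) t ⁻¹' A i := by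
      ext ω
      simp [hη, Set.mem_pi]
    rw [hpre]
    set sets : ℕ × ℕ → Set ℝ := fun p =>
      if h : p.1 - n < j then A ⟨p.1 - n, h⟩ else Set.univ with hsets
    set Sfin : Finset (ℕ × ℕ) := Finset.image (fun i : Fin j => (n + (i : ℕ), t - 1))
      Finset.univ with hSfin
    have hinj2 : ∀ a ∈ (Finset.univ : Finset (Fin j)), ∀ b ∈ (Finset.univ : Finset (Fin j)),
        (fun i : Fin j => ((n + (i : ℕ), t - 1) : ℕ × ℕ)) a
          = (fun i : Fin j => ((n + (i : ℕ), t - 1) : ℕ × ℕ)) b → a = b := by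
      intro a _ b _ hab
      simp only [Prod.mk.injEq] at hab
      exact Fin.ext (by omega)
    have hsets_meas : ∀ p ∈ Sfin, MeasurableSet (sets p) := by
      intro p hp
      simp only [hsets]
      split
      · exact hA _
      · exact MeasurableSet.univ
    have hfact := (iIndepFun_iff_measure_inter_preimage_eq_mul.1 qp.ξ_indep) Sfin hsets_meas
    have hxi_eq : ∀ i : Fin j,
        (fun ω => qp.ξ ((n + (i : ℕ)) + 1) ((t - 1) + 1) ω) = qp.ξ (n + 1 + (i : ℕ)) t := by
      intro i
      have h1 : n + (i : ℕ) + 1 = n + 1 + (i : ℕ) := by omega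
      have h2 : t - 1 + 1 = t := by omega
      rw [h1, h2]
    have hsets_eq : ∀ i : Fin j, sets (n + (i : ℕ), t - 1) = A i := by
      intro i
      have hilt := i.isLt
      simp only [hsets]
      rw [dif_pos (by omega : n + (i : ℕ) - n < j)]
      exact congrArg A (Fin.ext (show n + (i : ℕ) - n = (i : ℕ) by omega))
    have hxi_eq' : ∀ (i : Fin j) (ω : Ω),
        qp.ξ ((n + (i : ℕ)) + 1) ((t - 1) + 1) ω = qp.ξ (n + 1 + (i : ℕ)) t ω := by
      intro i ω
      have h1 : n + (i : ℕ) + 1 = n + 1 + (i : ℕ) := by omega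
      have h2 : t - 1 + 1 = t := by omega
      rw [h1, h2]
    have hInter : (⋂ p ∈ Sfin, (fun ω => qp.ξ (p.1 + 1) (p.2 + 1) ω) ⁻¹' sets p)
        = ⋂ i : Fin j, qp.ξ (n + 1 + (i : ℕ)) t ⁻¹' A i := by
      rw [hSfin, Finset.set_biInter_finset_image]
      ext ω
      simp only [Set.mem_iInter, Finset.mem_univ, Set.mem_preimage, forall_const, true_implies]
      refine forall_congr' fun i => ?_
      rw [hsets_eq i, hxi_eq' i ω]
    rw [hInter] at hfact
    rw [hfact, hSfin, Finset.prod_image hinj2]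
    refine Finset.prod_congr rfl fun i _ => ?_
    rw [hsets_eq i]
    have hmeas : Measurable (qp.ξ (n + 1 + (i : ℕ)) t) := qp.ξ_meas _ _ (by omega) ht1
    have hlaw := qp.ξ_law (n + 1 + (i : ℕ)) t (by omega) ht1
    calc qp.P ((fun ω => qp.ξ ((n + (i : ℕ)) + 1) ((t - 1) + 1) ω) ⁻¹' A i)
        = qp.P (qp.ξ (n + 1 + (i : ℕ)) t ⁻¹' A i) := by rw [hxi_eq i]
      _ = (qp.P.map (qp.ξ (n + 1 + (i : ℕ)) t)) (A i) := by
          rw [Measure.map_apply hmeas (hA i)]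
      _ = Q.μ (A i) := by rw [hlaw]
  -- the product-space events
  set SC : Set (((ℕ → ℝ) × (ℕ → ℝ)) × (Fin j → ℝ)) :=
    {z | ∀ k ∈ Finset.Icc 1 (n + j),
      (if k ≤ n then z.1.2 k
        else z.1.2 n + ∑ i ∈ Finset.univ.filter (fun i : Fin j => (i : ℕ) < k - n), z.2 i)
        < z.1.1 (k + 1) - Q.cp} with hSC
  have hSCmeas : MeasurableSet SC := by
    have : SC = ⋂ k ∈ Finset.Icc 1 (n + j),
        {z : ((ℕ → ℝ) × (ℕ → ℝ)) × (Fin j → ℝ) |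
          (if k ≤ n then z.1.2 k
            else z.1.2 n + ∑ i ∈ Finset.univ.filter (fun i : Fin j => (i : ℕ) < k - n), z.2 i)
            < z.1.1 (k + 1) - Q.cp} := by
      ext z
      simp [hSC]
    rw [this]
    refine MeasurableSet.biInter (Finset.Icc 1 (n + j) : Finset ℕ).countable_toSet fun k _ => ?_
    refine measurableSet_lt ?_ ?_
    · by_cases hk : k ≤ n
      · simp only [hk, if_true]
        exact (measurable_pi_apply k).comp (measurable_snd.comp measurable_fst)
      · simp only [hk, if_false]
        refine Measurable.add ?_ ?_
        · exact (measurable_pi_apply n).comp (measurable_snd.comp measurable_fst)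
        · exact Finset.measurable_sum _ fun i _ =>
            (measurable_pi_apply i).comp measurable_snd
    · exact ((measurable_pi_apply (k + 1)).comp (measurable_fst.comp measurable_fst)).sub
        measurable_const
  have hCpre : qp.waveC s j t = (fun ω => (V ω, η ω)) ⁻¹' SC := by
    ext ω
    rw [Set.mem_preimage, mem_waveC_iff]
    show (∀ k ∈ Finset.Icc 1 (n + j), _) ↔ _
    refine forall₂_congr fun k hk => ?_
    rw [Finset.mem_Icc] at hk
    have hrhs : (V ω, η ω).1.1 (k + 1) = qp.X (k + 1) (t - 1) ω := rfl
    by_cases hkn : k ≤ n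
    · have hlhs : (if k ≤ n then (V ω, η ω).1.2 k
          else (V ω, η ω).1.2 n + ∑ i ∈ Finset.univ.filter
            (fun i : Fin j => (i : ℕ) < k - n), (V ω, η ω).2 i)
          = ∑ m ∈ Finset.Icc 1 k, qp.ξ m t ω := by
        rw [if_pos hkn]
        simp only [hV, hkn, if_true]
      rw [hlhs]
    · have hlhs : (if k ≤ n then (V ω, η ω).1.2 k
          else (V ω, η ω).1.2 n + ∑ i ∈ Finset.univ.filter
            (fun i : Fin j => (i : ℕ) < k - n), (V ω, η ω).2 i)
          = ∑ m ∈ Finset.Icc 1 k, qp.ξ m t ω := by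
        rw [if_neg hkn]
        have hVn : (V ω).2 n = ∑ r ∈ Finset.Icc 1 n, qp.ξ r t ω := by
          simp only [hV, le_refl, if_true]
        have hsplit := sum_split (fun m => qp.ξ m t ω)
          (by omega : n ≤ k) (by omega : k ≤ n + j)
        rw [hsplit]
        rw [hVn]
      rw [hlhs]
  have hGoodpre : {ω | Q.IsGood j y (fun i => qp.ξ (s - t + i) t ω)}
      = η ⁻¹' SQGood.GoodSet Q j y := by
    ext ω
    simp only [Set.mem_setOf_eq, Set.mem_preimage, SQGood.GoodSet, QueueParams.IsGood]
    rw [SQGood.condWalkProb_eq]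
    have heq : (fun i : Fin j => (fun i' : ℕ => qp.ξ (s - t + i') t ω) ((i : ℕ) + 1)) = η ω := by
      funext i
      simp only [hη]
      congr 1
      omega
    rw [heq]
  have hBpre : qp.waveB s j y t
      = (fun ω => (V ω, η ω)) ⁻¹' (SC ∩ Set.univ ×ˢ SQGood.GoodSet Q j y) := by
    unfold QueueProcess.waveB
    rw [Set.preimage_inter, ← hCpre, hGoodpre]
    congr 1
    ext ω
    simp [Set.mem_prod]
  have hGoodmeas' : MeasurableSet ((Set.univ : Set ((ℕ → ℝ) × (ℕ → ℝ)))
      ×ˢ SQGood.GoodSet Q j y) :=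
    MeasurableSet.univ.prod (SQGood.GoodSet_measurable Q j y)
  haveI : IsProbabilityMeasure (qp.P.map V) := Measure.isProbabilityMeasure_map hVamb.aemeasurable
  have hpairmeas : Measurable fun ω => (V ω, η ω) := hVamb.prodMk hηamb
  have hPC : qp.P (qp.waveC s j t) = ((qp.P.map V).prod (SQGood.kpi Q j)) SC := by
    rw [hCpre, ← hηlaw, ← hmap, Measure.map_apply hpairmeas hSCmeas]
  have hPB : qp.P (qp.waveB s j y t) = ((qp.P.map V).prod (SQGood.kpi Q j))
      (SC ∩ Set.univ ×ˢ SQGood.GoodSet Q j y) := by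
    rw [hBpre, ← hηlaw, ← hmap,
      Measure.map_apply hpairmeas (hSCmeas.inter hGoodmeas')]
  rw [hPC, hPB, Measure.prod_apply hSCmeas, Measure.prod_apply (hSCmeas.inter hGoodmeas')]
  rw [← lintegral_const_mul 2 (measurable_measure_prodMk_left (hSCmeas.inter hGoodmeas'))]
  refine lintegral_mono fun v => ?_
  have hsect : Prod.mk v ⁻¹' (SC ∩ Set.univ ×ˢ SQGood.GoodSet Q j y)
      = (Prod.mk v ⁻¹' SC) ∩ SQGood.GoodSet Q j y := by
    ext h
    simp [Set.mem_prod]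
  rw [hsect]
  have hDmeas : MeasurableSet (Prod.mk v ⁻¹' SC) := measurable_prodMk_left hSCmeas
  have hDlower : IsLowerSet (Prod.mk v ⁻¹' SC) := by
    intro a b hba ha
    intro k hk
    have hak := ha k hk
    by_cases hkn : k ≤ n
    · simp only [Set.mem_preimage, Set.mem_setOf_eq, hkn, if_true] at hak ⊢
      exact hak
    · simp only [Set.mem_preimage, Set.mem_setOf_eq, hkn, if_false] at hak ⊢
      refine lt_of_le_of_lt ?_ hak
      refine add_le_add_right (Finset.sum_le_sum fun i _ => hba i) _
  exact SQGood.meas_lower_le_two_mul Q j y hy hDmeas hDlower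

end SQProc

theorem long_waves_le_twice_good_waves (Q : QueueParams) {Ω : Type} [MeasurableSpace Ω]
    (qp : QueueProcess Q Ω) (j s : ℕ) (hj4 : 4 ≤ j) (hjeven : Even j) (hsj : j < s)
    (y : ℝ) (hy : 0 < y) :
    ∑ t ∈ Finset.Icc 1 (j / 2), (qp.P (qp.waveC s j t)).toReal
      ≤ 2 * ∑ t ∈ Finset.Icc 1 (j / 2), (qp.P (qp.waveB s j y t)).toReal := by
  haveI := qp.P_prob
  have key : ∀ t ∈ Finset.Icc 1 (j / 2),
      (qp.P (qp.waveC s j t)).toReal ≤ 2 * (qp.P (qp.waveB s j y t)).toReal := by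
    intro t ht
    have h := SQProc.waveC_le_twice_waveB qp j s t (Finset.mem_Icc.1 ht).1 y hy
    have h2top : (2 : ℝ≥0∞) * qp.P (qp.waveB s j y t) ≠ ⊤ :=
      ENNReal.mul_ne_top (by norm_num) (measure_lt_top _ _).ne
    have hmono := ENNReal.toReal_mono h2top h
    rwa [ENNReal.toReal_mul, ENNReal.toReal_ofNat] at hmono
  calc ∑ t ∈ Finset.Icc 1 (j / 2), (qp.P (qp.waveC s j t)).toReal
      ≤ ∑ t ∈ Finset.Icc 1 (j / 2), 2 * (qp.P (qp.waveB s j y t)).toReal :=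
        Finset.sum_le_sum key
    _ = 2 * ∑ t ∈ Finset.Icc 1 (j / 2), (qp.P (qp.waveB s j y t)).toReal := by
        rw [Finset.mul_sum]
end
end
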